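/- arXiv:1901.03908 — 6 statements merged into one kernel-verified Lean document; each statement's English description precedes it below -/
import Mathlib

section
/- Let k ∈ ℕ, k ≥ 2, f ∈ C^{(r)}(I) with I = [a,b], let ω(t) = ω_k(f^{(r)}, t; I) denote the k-th modulus of smoothness of f^{(r)} on I, and let x, x_σ ∈ I with 0 < |x - x_σ| ≤ |I| where |I| = b - a. Set δ = |I| · (|x - x_σ|/|I|)^{1/k}. Then ∫_{|x-x_σ|}^{2|I|} ω(t)/t² dt ≤ (1 + 2^{2k-1}/(k-1)) · ω(δ)/|x - x_σ|. -/
open scoped BigOperators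

open Classical in
/-- Divided difference with possibly repeated knots, via derivative data `F`
(`F j` is the `j`-th derivative). -/
noncomputable def divDiff (F : ℕ → ℝ → ℝ) : List ℝ → ℝ
  | [] => 0
  | [x] => F 0 x
  | x :: y :: l =>
      if h : ∀ z ∈ y :: l, z = x then
        F ((y :: l).length) x / Nat.factorial ((y :: l).length)
      else
        (divDiff F (y :: l) -
          divDiff F (x :: (y :: l).eraseIdx ((y :: l).findIdx (fun z => z ≠ x)))) /
          ((y :: l).getD ((y :: l).findIdx (fun z => z ≠ x)) 0 - x)
termination_by l => l.length
decreasing_by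
  · simp
  · push_neg at h
    obtain ⟨z, hz, hzx⟩ := h
    have hlt : (y :: l).findIdx (fun z => decide (z ≠ x)) < (y :: l).length :=
      List.findIdx_lt_length_of_exists ⟨z, hz, by simpa using hzx⟩
    simp only [List.length_cons, List.length_eraseIdx] at *
    rw [if_pos hlt]; omega

/-- Newton form of the Hermite interpolation polynomial at the knots `xs`. -/
noncomputable def newtonSum (F : ℕ → ℝ → ℝ) (xs : List ℝ) (t : ℝ) : ℝ :=
  ∑ j ∈ Finset.range xs.length,
    divDiff F (xs.take (j + 1)) * ∏ i ∈ Finset.range j, (t - xs.getD i 0)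

/-- The `k`-th symmetric difference of `g`, set to `0` when the relevant points
leave `[a,b]`. -/
noncomputable def kSymmDiff (k : ℕ) (g : ℝ → ℝ) (u x a b : ℝ) : ℝ :=
  if a ≤ x - (k / 2 : ℝ) * u ∧ x + (k / 2 : ℝ) * u ≤ b then
    ∑ i ∈ Finset.range (k + 1), (-1 : ℝ) ^ i * (k.choose i) * g (x + ((k : ℝ) / 2 - i) * u)
  else 0

/-- The `k`-th modulus of smoothness of `g` on `[a,b]`. -/
noncomputable def smoothOmega (k : ℕ) (g : ℝ → ℝ) (t a b : ℝ) : ℝ :=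
  sSup {v : ℝ | ∃ u x : ℝ, 0 < u ∧ u ≤ t ∧ v = |kSymmDiff k g u x a b|}

/-- First modulus of continuity of `g` on `[a,b]`. -/
noncomputable def omega1 (g : ℝ → ℝ) (t a b : ℝ) : ℝ :=
  sSup {v : ℝ | ∃ x y : ℝ, x ∈ Set.Icc a b ∧ y ∈ Set.Icc a b ∧ |x - y| ≤ t ∧ v = |g x - g y|}

/-- Sup norm on `[a,b]`. -/
noncomputable def supNorm (g : ℝ → ℝ) (a b : ℝ) : ℝ :=
  sSup {v : ℝ | ∃ x ∈ Set.Icc a b, v = |g x|}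

/-- The knots extended by `x₋₁ = x₀ - (xₘ - x₀)` and `x_{m+1} = xₘ + (xₘ - x₀)`. -/
noncomputable def xExt (m : ℕ) (x : ℕ → ℝ) : ℤ → ℝ := fun i =>
  if i < 0 then x 0 - (x m - x 0) else if (m : ℤ) < i then x m + (x m - x 0) else x i.toNat

/-- `d(p,q) = min (x_{q+1} - x_p) (x_q - x_{p-1})`. -/
noncomputable def dpq (m : ℕ) (x : ℕ → ℝ) (p q : ℕ) : ℝ :=
  min (xExt m x ((q : ℤ) + 1) - x p) (x q - xExt m x ((p : ℤ) - 1))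

/-- `Λ_{p,q,r}(x_0,…,x_m; φ)`. -/
noncomputable def Lam (m r : ℕ) (x : ℕ → ℝ) (φ : ℝ → ℝ) (p q : ℕ) : ℝ :=
  (∫ u in Set.Ioc (x q - x p) (dpq m x p q), u ^ ((p : ℤ) + r - q - 1) * φ u) /
    ((∏ i ∈ Finset.range p, (x q - x i)) * ∏ i ∈ Finset.Ioc q m, (x i - x p))

/-- `Λ_r(x_0,…,x_m; φ) = max over admissible (p,q) of Λ_{p,q,r}`. -/
noncomputable def LamMax (m r : ℕ) (x : ℕ → ℝ) (φ : ℝ → ℝ) : ℝ :=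
  sSup {v : ℝ | ∃ p q : ℕ, q ≤ m ∧ p + r + 1 ≤ q ∧ v = Lam m r x φ p q}


open Finset Function
open scoped fwdDiff
open fwdDiff_aux

variable {k : ℕ} {g : ℝ → ℝ} {a b M : ℝ}

lemma kSymmDiff_abs_le (hM : ∀ y ∈ Set.Icc a b, |g y| ≤ M) (hM0 : 0 ≤ M)
    {u : ℝ} (hu : 0 ≤ u) (x : ℝ) : |kSymmDiff k g u x a b| ≤ 2 ^ k * M := by
  rw [kSymmDiff]
  split_ifs with hcond
  · calc |∑ i ∈ Finset.range (k + 1),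
        (-1 : ℝ) ^ i * (k.choose i) * g (x + ((k : ℝ) / 2 - i) * u)|
        ≤ ∑ i ∈ Finset.range (k + 1),
          |(-1 : ℝ) ^ i * (k.choose i) * g (x + ((k : ℝ) / 2 - i) * u)| :=
          Finset.abs_sum_le_sum_abs _ _
      _ ≤ ∑ i ∈ Finset.range (k + 1), (k.choose i : ℝ) * M := by
          refine Finset.sum_le_sum fun i hi => ?_
          have hik : (i : ℝ) ≤ k := by
            exact_mod_cast Nat.lt_succ_iff.mp (Finset.mem_range.mp hi)
          have hpt : x + ((k : ℝ) / 2 - i) * u ∈ Set.Icc a b := by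
            constructor
            · refine le_trans hcond.1 ?_
              have : (-((k:ℝ)/2)) * u ≤ ((k : ℝ) / 2 - i) * u := by
                apply mul_le_mul_of_nonneg_right _ hu
                have : (0:ℝ) ≤ i := by positivity
                linarith
              linarith
            · refine le_trans ?_ hcond.2
              have : ((k : ℝ) / 2 - i) * u ≤ ((k:ℝ)/2) * u := by
                apply mul_le_mul_of_nonneg_right _ hu
                have : (0:ℝ) ≤ i := by positivity
                linarith
              linarith
          rw [abs_mul, abs_mul, abs_pow, abs_neg, abs_one, one_pow, one_mul,
            Nat.abs_cast]
          exact mul_le_mul_of_nonneg_left (hM _ hpt) (by positivity)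
      _ = 2 ^ k * M := by
          rw [← Finset.sum_mul, ← Nat.cast_sum, Nat.sum_range_choose]
          push_cast; ring
  · rw [abs_zero]; positivity

lemma bddAbove_omegaSet (hbd : ∃ M, ∀ y ∈ Set.Icc a b, |g y| ≤ M) (t : ℝ) :
    BddAbove {v : ℝ | ∃ u x : ℝ, 0 < u ∧ u ≤ t ∧ v = |kSymmDiff k g u x a b|} := by
  obtain ⟨M, hM⟩ := hbd
  refine ⟨2 ^ k * max M 0, fun v hv => ?_⟩
  obtain ⟨u, x, hu, _, rfl⟩ := hv
  exact kSymmDiff_abs_le (fun y hy => (hM y hy).trans (le_max_left _ _))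
    (le_max_right _ _) hu.le x

lemma zero_mem_omegaSet {t : ℝ} (ht : 0 < t) :
    (0:ℝ) ∈ {v : ℝ | ∃ u x : ℝ, 0 < u ∧ u ≤ t ∧ v = |kSymmDiff k g u x a b|} := by
  refine ⟨t, a - 1 - (k / 2 : ℝ) * t, ht, le_refl _, ?_⟩
  rw [kSymmDiff, if_neg, abs_zero]
  rintro ⟨h1, -⟩
  have : (0:ℝ) ≤ (k / 2 : ℝ) * t := by positivity
  linarith

lemma smoothOmega_nonneg (hbd : ∃ M, ∀ y ∈ Set.Icc a b, |g y| ≤ M) {t : ℝ} (ht : 0 < t) :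
    0 ≤ smoothOmega k g t a b :=
  le_csSup (bddAbove_omegaSet hbd t) (zero_mem_omegaSet ht)

lemma smoothOmega_mono (hbd : ∃ M, ∀ y ∈ Set.Icc a b, |g y| ≤ M) {t₁ t₂ : ℝ}
    (ht₁ : 0 < t₁) (h12 : t₁ ≤ t₂) :
    smoothOmega k g t₁ a b ≤ smoothOmega k g t₂ a b := by
  refine csSup_le_csSup (bddAbove_omegaSet hbd t₂) ⟨0, zero_mem_omegaSet ht₁⟩ ?_
  rintro v ⟨u, x, hu, hut, rfl⟩
  exact ⟨u, x, hu, hut.trans h12, rfl⟩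



lemma fwdDiff_comp_shift (v : ℝ) :
    fwdDiffₗ ℝ ℝ (v + v) = fwdDiffₗ ℝ ℝ v * (shiftₗ ℝ ℝ v + 1) := by
  ext f y
  simp [fwdDiffₗ, fwdDiff, shiftₗ_apply, shiftₗ]
  ring_nf

lemma fwdDiff_double (v : ℝ) (f : ℝ → ℝ) (k : ℕ) (y : ℝ) :
    (fwdDiff (v + v))^[k] f y
      = ∑ j ∈ Finset.range (k+1), (k.choose j : ℝ) * (fwdDiff v)^[k] f (y + j*v) := by
  have hshift : shiftₗ ℝ ℝ v = fwdDiffₗ ℝ ℝ v + 1 := rfl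
  have hcomm : Commute (fwdDiffₗ ℝ ℝ v) (shiftₗ ℝ ℝ v + 1) := by
    rw [hshift]
    exact ((Commute.refl _).add_right (Commute.one_right _)).add_right (Commute.one_right _)
  have hpow : fwdDiffₗ ℝ ℝ (v + v) ^ k =
      fwdDiffₗ ℝ ℝ v ^ k * (shiftₗ ℝ ℝ v + 1) ^ k := by
    rw [fwdDiff_comp_shift, hcomm.mul_pow]
  have hbin : (shiftₗ ℝ ℝ v + 1) ^ k =
      ∑ j ∈ Finset.range (k+1), (k.choose j : Module.End ℤ (ℝ → ℝ)) * shiftₗ ℝ ℝ v ^ j := by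
    rw [(Commute.one_right (shiftₗ ℝ ℝ v)).add_pow]
    exact Finset.sum_congr rfl fun j _ => by
      rw [one_pow, mul_one, (Nat.cast_commute (k.choose j) (shiftₗ ℝ ℝ v ^ j)).eq]
  have key : (fwdDiffₗ ℝ ℝ (v+v) ^ k) f y
      = ∑ j ∈ Finset.range (k+1),
          (k.choose j : ℕ) • ((fwdDiffₗ ℝ ℝ v ^ k) ((shiftₗ ℝ ℝ v ^ j) f)) y := by
    rw [hpow, hbin]
    have : ((∑ j ∈ Finset.range (k+1),
        (k.choose j : Module.End ℤ (ℝ → ℝ)) * shiftₗ ℝ ℝ v ^ j) f)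
        = ∑ j ∈ Finset.range (k+1), (k.choose j : ℕ) • ((shiftₗ ℝ ℝ v ^ j) f) := by
      rw [LinearMap.sum_apply]
      exact Finset.sum_congr rfl fun j _ => by
        rw [Module.End.mul_apply, Module.End.natCast_apply]
    rw [Module.End.mul_apply, this, map_sum, Finset.sum_apply]
    exact Finset.sum_congr rfl fun j _ => by rw [map_nsmul, Pi.smul_apply]
  have hc2 : ∀ j, (fwdDiffₗ ℝ ℝ v ^ k) ((shiftₗ ℝ ℝ v ^ j) f)
      = (shiftₗ ℝ ℝ v ^ j) ((fwdDiffₗ ℝ ℝ v ^ k) f) := by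
    intro j
    have hcw : Commute (fwdDiffₗ ℝ ℝ v ^ k) (shiftₗ ℝ ℝ v ^ j) := by
      apply Commute.pow_pow
      rw [hshift]
      exact (Commute.refl _).add_right (Commute.one_right _)
    calc (fwdDiffₗ ℝ ℝ v ^ k) ((shiftₗ ℝ ℝ v ^ j) f)
        = (fwdDiffₗ ℝ ℝ v ^ k * shiftₗ ℝ ℝ v ^ j) f := rfl
      _ = (shiftₗ ℝ ℝ v ^ j * fwdDiffₗ ℝ ℝ v ^ k) f := by rw [hcw.eq]
      _ = _ := rfl
  calc (fwdDiff (v+v))^[k] f y = (fwdDiffₗ ℝ ℝ (v+v) ^ k) f y := by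
        rw [coe_fwdDiffₗ_pow]
    _ = ∑ j ∈ Finset.range (k+1),
          (k.choose j : ℕ) • ((fwdDiffₗ ℝ ℝ v ^ k) ((shiftₗ ℝ ℝ v ^ j) f)) y := key
    _ = ∑ j ∈ Finset.range (k+1), (k.choose j : ℝ) * (fwdDiff v)^[k] f (y + j*v) := by
        refine Finset.sum_congr rfl fun j _ => ?_
        rw [hc2 j, shiftₗ_pow_apply, coe_fwdDiffₗ_pow, nsmul_eq_mul, nsmul_eq_mul]

lemma kSymmDiff_pos_eq (k : ℕ) (g : ℝ → ℝ) (u x a b : ℝ)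
    (h : a ≤ x - (k / 2 : ℝ) * u ∧ x + (k / 2 : ℝ) * u ≤ b) :
    kSymmDiff k g u x a b = (fwdDiff u)^[k] g (x - (k / 2 : ℝ) * u) := by
  rw [kSymmDiff, if_pos h, fwdDiff_iter_eq_sum_shift]
  rw [← Finset.sum_range_reflect]
  refine Finset.sum_congr rfl fun i hi => ?_
  have hik : i ≤ k := Nat.lt_succ_iff.mp (Finset.mem_range.mp hi)
  have h1 : k + 1 - 1 - i = k - i := by omega
  have h2 : k - (k - i) = i := by omega
  have h3 : x + ((k:ℝ)/2 - (((k-i):ℕ):ℝ)) * u = x - (k:ℝ)/2*u + i • u := by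
    rw [Nat.cast_sub hik, nsmul_eq_mul]; ring
  rw [h1, Nat.choose_symm hik, h3, zsmul_eq_mul]
  push_cast
  ring

lemma smoothOmega_double (hbd : ∃ M, ∀ y ∈ Set.Icc a b, |g y| ≤ M) {t : ℝ} (ht : 0 < t) :
    smoothOmega k g (t + t) a b ≤ 2 ^ k * smoothOmega k g t a b := by
  have hω0 : 0 ≤ smoothOmega k g t a b := smoothOmega_nonneg hbd ht
  refine Real.sSup_le ?_ (by positivity)
  rintro v ⟨u, x, hu, hut, rfl⟩
  rw [kSymmDiff]
  split_ifs with hcond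
  · set w := u / 2 with hw
    have hw0 : 0 < w := by positivity
    have hwt : w ≤ t := by rw [hw]; linarith
    have huw : u = w + w := by rw [hw]; ring
    have hsum : ∑ i ∈ Finset.range (k + 1),
        (-1 : ℝ) ^ i * (k.choose i) * g (x + ((k : ℝ) / 2 - i) * u)
        = (fwdDiff (w + w))^[k] g (x - (k / 2 : ℝ) * u) := by
      have := kSymmDiff_pos_eq k g u x a b hcond
      rw [kSymmDiff, if_pos hcond] at this
      rw [this, huw]
    rw [hsum, fwdDiff_double]
    calc |∑ j ∈ Finset.range (k+1),
        (k.choose j : ℝ) * (fwdDiff w)^[k] g (x - (k / 2 : ℝ) * u + j*w)|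
        ≤ ∑ j ∈ Finset.range (k+1),
          |(k.choose j : ℝ) * (fwdDiff w)^[k] g (x - (k / 2 : ℝ) * u + j*w)| :=
          Finset.abs_sum_le_sum_abs _ _
      _ ≤ ∑ j ∈ Finset.range (k+1), (k.choose j : ℝ) * smoothOmega k g t a b := by
          refine Finset.sum_le_sum fun j hj => ?_
          rw [abs_mul, Nat.abs_cast]
          refine mul_le_mul_of_nonneg_left ?_ (by positivity)
          set xj := x - (k / 2 : ℝ) * u + j*w + (k / 2 : ℝ) * w with hxj
          have hjk : (j : ℝ) ≤ k := by
            exact_mod_cast Nat.lt_succ_iff.mp (Finset.mem_range.mp hj)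
          have hj0 : (0:ℝ) ≤ (j:ℝ) := by positivity
          have hcondj : a ≤ xj - (k / 2 : ℝ) * w ∧ xj + (k / 2 : ℝ) * w ≤ b := by
            constructor
            · have h1 := hcond.1
              have : xj - (k / 2 : ℝ) * w = x - (k / 2 : ℝ) * u + j*w := by rw [hxj]; ring
              rw [this]
              nlinarith
            · have h2 := hcond.2
              have : xj + (k / 2 : ℝ) * w = x - (k / 2 : ℝ) * u + j*w + (k:ℝ)*w := by
                rw [hxj]; ring
              rw [this, huw]
              nlinarith
          have heq : (fwdDiff w)^[k] g (x - (k / 2 : ℝ) * u + j*w)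
              = kSymmDiff k g w xj a b := by
            rw [kSymmDiff_pos_eq k g w xj a b hcondj]
            congr 1
            rw [hxj]; ring
          rw [heq]
          exact le_csSup (bddAbove_omegaSet hbd t) ⟨w, xj, hw0, hwt, rfl⟩
      _ = 2 ^ k * smoothOmega k g t a b := by
          rw [← Finset.sum_mul, ← Nat.cast_sum, Nat.sum_range_choose]
          push_cast; ring
  · rw [abs_zero]; positivity

lemma smoothOmega_growth_aux (hbd : ∃ M, ∀ y ∈ Set.Icc a b, |g y| ≤ M) (n : ℕ) :
    ∀ t δ : ℝ, 0 < δ → δ ≤ t → t ≤ δ * 2 ^ n →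
    smoothOmega k g t a b ≤ 2 ^ k * (t / δ) ^ k * smoothOmega k g δ a b := by
  induction n with
  | zero =>
    intro t δ hδ hδt htδ
    have : t = δ := le_antisymm (by simpa using htδ) hδt
    subst this
    have h1 : t / t = 1 := div_self (ne_of_gt hδ)
    rw [h1, one_pow, mul_one]
    have hnn : 0 ≤ smoothOmega k g t a b := smoothOmega_nonneg hbd hδ
    have h2k : (1:ℝ) ≤ 2 ^ k := by
      calc (1:ℝ) = 1 ^ k := (one_pow k).symm
        _ ≤ 2 ^ k := pow_le_pow_left₀ (by norm_num) (by norm_num) k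
    calc smoothOmega k g t a b = 1 * smoothOmega k g t a b := (one_mul _).symm
      _ ≤ 2 ^ k * smoothOmega k g t a b := mul_le_mul_of_nonneg_right h2k hnn
  | succ n IH =>
    intro t δ hδ hδt htδ
    by_cases hsmall : t ≤ δ * 2 ^ n
    · exact IH t δ hδ hδt hsmall
    push_neg at hsmall
    have ht0 : 0 < t := lt_of_lt_of_le hδ hδt
    by_cases hhalf : δ ≤ t / 2
    · have ht2 : t / 2 ≤ δ * 2 ^ n := by
        rw [div_le_iff₀ (by norm_num : (0:ℝ) < 2)]
        calc t ≤ δ * 2 ^ (n+1) := htδ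
          _ = δ * 2 ^ n * 2 := by ring
      have hd : smoothOmega k g t a b ≤ 2 ^ k * smoothOmega k g (t/2) a b := by
        have hd' := smoothOmega_double (k := k) hbd (show (0:ℝ) < t/2 by positivity)
        have he : t/2 + t/2 = t := by ring
        rw [he] at hd'
        exact hd'
      have hIH := IH (t/2) δ hδ hhalf ht2
      have hωδ : 0 ≤ smoothOmega k g δ a b := smoothOmega_nonneg hbd hδ
      have hpow : ((t/2) / δ) ^ k = (t / δ) ^ k / 2 ^ k := by
        have he : (t/2)/δ = (t/δ)/2 := by ring
        rw [he, div_pow]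
      calc smoothOmega k g t a b ≤ 2 ^ k * smoothOmega k g (t/2) a b := hd
        _ ≤ 2 ^ k * (2 ^ k * ((t/2) / δ) ^ k * smoothOmega k g δ a b) := by
            refine mul_le_mul_of_nonneg_left hIH (by positivity)
        _ = 2 ^ k * (t / δ) ^ k * smoothOmega k g δ a b := by
            rw [hpow]
            field_simp
    · push_neg at hhalf
      have hωδ : 0 ≤ smoothOmega k g δ a b := smoothOmega_nonneg hbd hδ
      calc smoothOmega k g t a b ≤ smoothOmega k g (δ + δ) a b :=
            smoothOmega_mono hbd ht0 (by linarith)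
        _ ≤ 2 ^ k * smoothOmega k g δ a b := smoothOmega_double hbd hδ
        _ ≤ 2 ^ k * (t / δ) ^ k * smoothOmega k g δ a b := by
            have h1 : (1:ℝ) ≤ t / δ := (one_le_div hδ).mpr hδt
            have h2 : (1:ℝ) ≤ (t / δ) ^ k := by
              calc (1:ℝ) = 1 ^ k := (one_pow k).symm
                _ ≤ (t / δ) ^ k := pow_le_pow_left₀ (by norm_num) h1 k
            calc 2 ^ k * smoothOmega k g δ a b
                = 2 ^ k * (1 * smoothOmega k g δ a b) := by ring
              _ ≤ 2 ^ k * ((t / δ) ^ k * smoothOmega k g δ a b) :=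
                  mul_le_mul_of_nonneg_left
                    (mul_le_mul_of_nonneg_right h2 hωδ) (by positivity)
              _ = 2 ^ k * (t / δ) ^ k * smoothOmega k g δ a b := by ring

lemma smoothOmega_growth (hbd : ∃ M, ∀ y ∈ Set.Icc a b, |g y| ≤ M)
    {t δ : ℝ} (hδ : 0 < δ) (hδt : δ ≤ t) :
    smoothOmega k g t a b ≤ 2 ^ k * (t / δ) ^ k * smoothOmega k g δ a b := by
  obtain ⟨n, hn⟩ := pow_unbounded_of_one_lt (t / δ) (by norm_num : (1:ℝ) < 2)
  refine smoothOmega_growth_aux hbd n t δ hδ hδt ?_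
  rw [div_lt_iff₀ hδ] at hn
  nlinarith

lemma smoothOmega_zero_of_nonpos {t : ℝ} (ht : t ≤ 0) : smoothOmega k g t a b = 0 := by
  rw [smoothOmega]
  convert Real.sSup_empty using 2
  ext v
  simp only [Set.mem_setOf_eq, Set.mem_empty_iff_false, iff_false]
  rintro ⟨u, x, hu, hut, -⟩
  linarith

lemma smoothOmega_global_mono (hbd : ∃ M, ∀ y ∈ Set.Icc a b, |g y| ≤ M) :
    Monotone (fun t => smoothOmega k g t a b) := by
  intro t₁ t₂ h12
  simp only []
  rcases le_or_gt t₁ 0 with h1 | h1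
  · rw [smoothOmega_zero_of_nonpos h1]
    rcases le_or_gt t₂ 0 with h2 | h2
    · rw [smoothOmega_zero_of_nonpos h2]
    · exact smoothOmega_nonneg hbd h2
  · exact smoothOmega_mono hbd h1 h12

lemma smoothOmega_le_bound (hM : ∀ y ∈ Set.Icc a b, |g y| ≤ M) (t : ℝ) :
    smoothOmega k g t a b ≤ 2 ^ k * max M 0 := by
  refine Real.sSup_le ?_ (by positivity)
  rintro v ⟨u, x, hu, hut, rfl⟩
  exact kSymmDiff_abs_le (fun y hy => (hM y hy).trans (le_max_left _ _))
    (le_max_right _ _) hu.le x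

/-- bounding the tail integral of the modulus of smoothness. -/
theorem stmt4 (k r : ℕ) (hk : 2 ≤ k) (a b : ℝ) (hab : a < b)
    (f : ℝ → ℝ) (hf : ContDiffOn ℝ r f (Set.Icc a b))
    (x xs : ℝ) (hx : x ∈ Set.Icc a b) (hxs : xs ∈ Set.Icc a b)
    (h1 : 0 < |x - xs|) (h2 : |x - xs| ≤ b - a) :
    (∫ t in Set.Ioc |x - xs| (2 * (b - a)),
        smoothOmega k (iteratedDerivWithin r f (Set.Icc a b)) t a b / t ^ 2) ≤
      (1 + 2 ^ (2 * k - 1) / ((k : ℝ) - 1)) *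
        smoothOmega k (iteratedDerivWithin r f (Set.Icc a b))
          ((b - a) * (|x - xs| / (b - a)) ^ ((1 : ℝ) / (k : ℝ))) a b / |x - xs| := by
  set g := iteratedDerivWithin r f (Set.Icc a b) with hg
  set h := |x - xs| with hh
  set L := b - a with hL
  set δ := L * (h / L) ^ ((1 : ℝ) / (k : ℝ)) with hδdef
  have hL0 : 0 < L := by rw [hL]; linarith
  -- bound on g
  have hgc : ContinuousOn g (Set.Icc a b) :=
    hf.continuousOn_iteratedDerivWithin le_rfl (uniqueDiffOn_Icc hab)
  have hbd : ∃ M, ∀ y ∈ Set.Icc a b, |g y| ≤ M := by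
    obtain ⟨C, hC⟩ := (isCompact_Icc (a := a) (b := b)).exists_bound_of_continuousOn hgc
    exact ⟨C, fun y hy => by simpa [Real.norm_eq_abs] using hC y hy⟩
  -- basic facts on δ
  have hq0 : 0 < (h / L) ^ ((1 : ℝ) / (k : ℝ)) :=
    Real.rpow_pos_of_pos (div_pos h1 hL0) _
  have hδ0 : 0 < δ := mul_pos hL0 hq0
  have hk0 : (0:ℝ) < (k:ℝ) := by positivity
  have hq1 : (h / L) ^ ((1 : ℝ) / (k : ℝ)) ≤ 1 :=
    Real.rpow_le_one (div_nonneg h1.le hL0.le) ((div_le_one hL0).mpr h2) (by positivity)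
  have hδL : δ ≤ L := by
    calc δ = L * (h / L) ^ ((1 : ℝ) / (k : ℝ)) := rfl
      _ ≤ L * 1 := mul_le_mul_of_nonneg_left hq1 hL0.le
      _ = L := mul_one L
  have hhδ : h ≤ δ := by
    have hbase : h / L ≤ (h / L) ^ ((1 : ℝ) / (k : ℝ)) := by
      have := Real.rpow_le_rpow_of_exponent_ge (div_pos h1 hL0)
        ((div_le_one hL0).mpr h2) (show (1:ℝ)/(k:ℝ) ≤ 1 by
          rw [div_le_one hk0]; exact_mod_cast Nat.one_le_iff_ne_zero.mpr (by omega))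
      simpa [Real.rpow_one] using this
    calc h = L * (h / L) := by field_simp
      _ ≤ L * (h / L) ^ ((1 : ℝ) / (k : ℝ)) := mul_le_mul_of_nonneg_left hbase hL0.le
      _ = δ := rfl
  have hδk : δ ^ k = L ^ (k - 1) * h := by
    have hq : ((h / L) ^ ((1 : ℝ) / (k : ℝ))) ^ (k:ℕ) = h / L := by
      rw [← Real.rpow_natCast ((h / L) ^ ((1 : ℝ) / (k : ℝ))) k,
        ← Real.rpow_mul (div_nonneg h1.le hL0.le)]
      rw [one_div, inv_mul_cancel₀ (ne_of_gt hk0), Real.rpow_one]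
    calc δ ^ k = L ^ k * ((h / L) ^ ((1 : ℝ) / (k : ℝ))) ^ (k:ℕ) := by
          rw [hδdef, mul_pow]
      _ = L ^ k * (h / L) := by rw [hq]
      _ = L ^ (k - 1) * h := by
          have : L ^ k = L ^ (k - 1) * L := by
            rw [← pow_succ]; congr 1; omega
          rw [this, mul_assoc, mul_comm L (h/L), div_mul_cancel₀ h (ne_of_gt hL0)]
  set A := smoothOmega k g δ a b with hA
  have hA0 : 0 ≤ A := smoothOmega_nonneg hbd hδ0
  set φ := fun t : ℝ => smoothOmega k g t a b / t ^ 2 with hφ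
  -- integrability of φ on Ioc h (2L)
  have hmono : Monotone (fun t => smoothOmega k g t a b) := smoothOmega_global_mono hbd
  have hmeas : Measurable φ := by
    apply Measurable.div
    · exact hmono.measurable
    · exact (measurable_id.pow_const 2)
  obtain ⟨M, hM⟩ := hbd
  have hφ_bd : ∀ t ∈ Set.Ioc h (2*L), |φ t| ≤ 2 ^ k * max M 0 / h ^ 2 := by
    intro t ht
    have ht0 : 0 < t := lt_trans h1 ht.1
    have hωt : 0 ≤ smoothOmega k g t a b := smoothOmega_nonneg ⟨M, hM⟩ ht0
    have : |φ t| = smoothOmega k g t a b / t ^ 2 := by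
      rw [hφ, abs_of_nonneg (by positivity)]
    rw [this]
    apply div_le_div₀ (by positivity) (smoothOmega_le_bound hM t) (by positivity)
    exact pow_le_pow_left₀ h1.le ht.1.le 2
  have hint : MeasureTheory.IntegrableOn φ (Set.Ioc h (2*L)) := by
    have hconst : MeasureTheory.IntegrableOn
        (fun _ : ℝ => 2 ^ k * max M 0 / h ^ 2) (Set.Ioc h (2*L)) :=
      MeasureTheory.integrableOn_const measure_Ioc_lt_top.ne
    refine hconst.mono' hmeas.aestronglyMeasurable ?_
    exact MeasureTheory.ae_restrict_of_forall_mem measurableSet_Ioc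
      (fun t ht => by simpa [Real.norm_eq_abs] using hφ_bd t ht)
  have hbd' : ∃ M, ∀ y ∈ Set.Icc a b, |g y| ≤ M := ⟨M, hM⟩
  -- interval integrability on subintervals
  have hi1 : IntervalIntegrable φ MeasureTheory.volume h δ := by
    rw [intervalIntegrable_iff_integrableOn_Ioc_of_le hhδ]
    exact hint.mono_set (Set.Ioc_subset_Ioc le_rfl (by linarith))
  have hi2 : IntervalIntegrable φ MeasureTheory.volume δ (2*L) := by
    rw [intervalIntegrable_iff_integrableOn_Ioc_of_le (by linarith)]
    exact hint.mono_set (Set.Ioc_subset_Ioc hhδ le_rfl)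
  have hsplit : (∫ t in Set.Ioc h (2*L), φ t) = (∫ t in h..δ, φ t) + ∫ t in δ..(2*L), φ t := by
    rw [← intervalIntegral.integral_of_le (by linarith : h ≤ 2*L),
      ← intervalIntegral.integral_add_adjacent_intervals hi1 hi2]
  have h0uIcc : (0:ℝ) ∉ Set.uIcc h δ := Set.notMem_uIcc_of_lt h1 hδ0
  -- piece 1
  have hI1 : (∫ t in h..δ, φ t) ≤ A / h := by
    have hcomp : ∀ t ∈ Set.Icc h δ, φ t ≤ A * t ^ (-2 : ℤ) := by
      intro t ht
      have ht0 : 0 < t := lt_of_lt_of_le h1 ht.1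
      have hmt : smoothOmega k g t a b ≤ A := hmono ht.2
      have heq : A * t ^ (-2 : ℤ) = A / t ^ 2 := by
        rw [zpow_neg, ← div_eq_mul_inv]
        congr 1
      rw [heq]
      exact div_le_div₀ hA0 hmt (by positivity) le_rfl
    have hgint : IntervalIntegrable (fun t => A * t ^ (-2:ℤ)) MeasureTheory.volume h δ :=
      (intervalIntegral.intervalIntegrable_zpow (Or.inr h0uIcc)).const_mul A
    have hzint : (∫ t in h..δ, (t:ℝ) ^ (-2:ℤ)) = h⁻¹ - δ⁻¹ := by
      rw [integral_zpow (Or.inr ⟨by norm_num, h0uIcc⟩)]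
      norm_num
      ring
    calc (∫ t in h..δ, φ t) ≤ ∫ t in h..δ, A * t ^ (-2:ℤ) :=
        intervalIntegral.integral_mono_on hhδ hi1 hgint hcomp
      _ = A * (h⁻¹ - δ⁻¹) := by
          rw [intervalIntegral.integral_const_mul, hzint]
      _ ≤ A * h⁻¹ := by
          refine mul_le_mul_of_nonneg_left ?_ hA0
          have : (0:ℝ) ≤ δ⁻¹ := by positivity
          linarith
      _ = A / h := by rw [div_eq_mul_inv]
  -- piece 2
  set C := 2 ^ k * A / δ ^ k with hC
  have hC0 : 0 ≤ C := by positivity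
  have hI2 : (∫ t in δ..(2*L), φ t) ≤ 2 ^ (2*k - 1) / ((k:ℝ) - 1) * A / h := by
    have hcomp2 : ∀ t ∈ Set.Icc δ (2*L), φ t ≤ C * t ^ (k - 2 : ℕ) := by
      intro t ht
      have ht0 : 0 < t := lt_of_lt_of_le hδ0 ht.1
      have hgrow : smoothOmega k g t a b ≤ 2 ^ k * (t / δ) ^ k * A := smoothOmega_growth hbd' hδ0 ht.1
      have hstep : φ t ≤ 2 ^ k * (t/δ)^k * A / t ^ 2 :=
        div_le_div₀ (by positivity) hgrow (by positivity) le_rfl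
      refine hstep.trans (le_of_eq ?_)
      have htk : t ^ k = t ^ (k-2) * t ^ 2 := by rw [← pow_add]; congr 1; omega
      rw [hC, div_pow]
      field_simp
      rw [htk]
      ring
    have hgint2 : IntervalIntegrable (fun t => C * t ^ (k-2:ℕ))
        MeasureTheory.volume δ (2*L) :=
      (intervalIntegral.intervalIntegrable_pow _).const_mul C
    have hcast : ((k - 2 : ℕ) : ℝ) + 1 = (k:ℝ) - 1 := by
      have : ((k - 2 : ℕ) : ℝ) = (k:ℝ) - 2 := by
        push_cast [Nat.cast_sub hk]; ring
      rw [this]; ring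
    have hk1 : (0:ℝ) < (k:ℝ) - 1 := by
      have : (2:ℝ) ≤ (k:ℝ) := by exact_mod_cast hk
      linarith
    calc (∫ t in δ..(2*L), φ t) ≤ ∫ t in δ..(2*L), C * t ^ (k-2:ℕ) :=
        intervalIntegral.integral_mono_on (by linarith) hi2 hgint2 hcomp2
      _ = C * (((2*L) ^ (k-2+1) - δ ^ (k-2+1)) / (((k-2:ℕ):ℝ) + 1)) := by
          rw [intervalIntegral.integral_const_mul, integral_pow]
      _ ≤ C * ((2*L) ^ (k-1) / ((k:ℝ) - 1)) := by
          have he : k - 2 + 1 = k - 1 := by omega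
          rw [he, hcast]
          refine mul_le_mul_of_nonneg_left ?_ hC0
          have hd : (0:ℝ) ≤ δ ^ (k-1) := by positivity
          exact (div_le_div_iff_of_pos_right hk1).mpr (by linarith)
      _ = 2 ^ (2*k - 1) / ((k:ℝ) - 1) * A / h := by
          have h2 : (2:ℝ) ^ (2*k-1) = 2 ^ k * 2 ^ (k-1) := by
            rw [← pow_add]; congr 1; omega
          rw [hC, hδk, mul_pow, h2]
          have hLk : (0:ℝ) < L ^ (k-1) := by positivity
          field_simp
  -- combine
  have hgoal1 : (∫ t in Set.Ioc h (2*L), φ t)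
      ≤ A / h + 2 ^ (2*k - 1) / ((k:ℝ) - 1) * A / h := by
    rw [hsplit]; exact add_le_add hI1 hI2
  calc (∫ t in Set.Ioc h (2*L), φ t)
      ≤ A / h + 2 ^ (2*k - 1) / ((k:ℝ) - 1) * A / h := hgoal1
    _ = (1 + 2 ^ (2 * k - 1) / ((k : ℝ) - 1)) * A / h := by ring
end

section
/- Divided differences with repeated knots are symmetric: for any permutation π of {0,...,m}, [x_{π(0)},...,x_{π(m)}; f] = [x_0,...,x_m; f], provided f has m_j - 1 derivatives at every knot of multiplicity m_j. -/
open scoped BigOperators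

open Classical in
noncomputable def ddS (F : ℕ → ℝ → ℝ) (s : Multiset ℝ) : ℝ :=
  if h : ∃ p : ℝ × ℝ, p.1 ∈ s ∧ p.2 ∈ s ∧ p.1 ≠ p.2 then
    (ddS F (s.erase h.choose.1) - ddS F (s.erase h.choose.2)) /
      (h.choose.2 - h.choose.1)
  else if h0 : ∃ z : ℝ, z ∈ s then
    F (Multiset.card s - 1) h0.choose / Nat.factorial (Multiset.card s - 1)
  else 0
termination_by Multiset.card s
decreasing_by
  · exact Multiset.card_erase_lt_of_mem h.choose_spec.1
  · exact Multiset.card_erase_lt_of_mem h.choose_spec.2.1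

theorem ddS_spec (F : ℕ → ℝ → ℝ) : ∀ n (s : Multiset ℝ), Multiset.card s = n →
    ∀ x y : ℝ, x ∈ s → y ∈ s → x ≠ y →
    ddS F s = (ddS F (s.erase x) - ddS F (s.erase y)) / (y - x) := by
  intro n
  induction n using Nat.strong_induction_on with
  | _ n IH =>
  intro s hs x y hx hy hxy
  have Dsymm : ∀ a b : ℝ, (ddS F (s.erase a) - ddS F (s.erase b)) / (b - a)
      = (ddS F (s.erase b) - ddS F (s.erase a)) / (a - b) := by
    intro a b
    rw [← neg_sub (ddS F (s.erase a)), ← neg_sub b a, neg_div_neg_eq]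
  have Dstep : ∀ a b c : ℝ, a ∈ s → b ∈ s → c ∈ s → a ≠ b → a ≠ c → b ≠ c →
      (ddS F (s.erase a) - ddS F (s.erase b)) / (b - a)
        = (ddS F (s.erase a) - ddS F (s.erase c)) / (c - a) := by
    intro a b c ha hb hc hab hac hbc
    have hca : Multiset.card (s.erase a) < n := hs ▸ Multiset.card_erase_lt_of_mem ha
    have hcb : Multiset.card (s.erase b) < n := hs ▸ Multiset.card_erase_lt_of_mem hb
    have hcc : Multiset.card (s.erase c) < n := hs ▸ Multiset.card_erase_lt_of_mem hc
    have e1 : ddS F (s.erase a)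
        = (ddS F ((s.erase a).erase b) - ddS F ((s.erase a).erase c)) / (c - b) :=
      IH _ hca _ rfl b c ((Multiset.mem_erase_of_ne hab.symm).2 hb)
        ((Multiset.mem_erase_of_ne hac.symm).2 hc) hbc
    have e2 : ddS F (s.erase b)
        = (ddS F ((s.erase b).erase a) - ddS F ((s.erase b).erase c)) / (c - a) :=
      IH _ hcb _ rfl a c ((Multiset.mem_erase_of_ne hab).2 ha)
        ((Multiset.mem_erase_of_ne hbc.symm).2 hc) hac
    have e3 : ddS F (s.erase c)
        = (ddS F ((s.erase c).erase a) - ddS F ((s.erase c).erase b)) / (b - a) :=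
      IH _ hcc _ rfl a b ((Multiset.mem_erase_of_ne hac).2 ha)
        ((Multiset.mem_erase_of_ne hbc).2 hb) hab
    rw [Multiset.erase_comm s b a] at e2
    rw [Multiset.erase_comm s c a, Multiset.erase_comm s c b] at e3
    set A := ddS F ((s.erase a).erase b)
    set B := ddS F ((s.erase a).erase c)
    set C := ddS F ((s.erase b).erase c)
    rw [e1, e2, e3]
    have h1 : b - a ≠ 0 := sub_ne_zero.2 hab.symm
    have h2 : c - a ≠ 0 := sub_ne_zero.2 hac.symm
    have h3 : c - b ≠ 0 := sub_ne_zero.2 hbc.symm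
    field_simp
    ring
  have Dany : ∀ a b a' b' : ℝ, a ∈ s → b ∈ s → a' ∈ s → b' ∈ s → a ≠ b → a' ≠ b' →
      (ddS F (s.erase a) - ddS F (s.erase b)) / (b - a)
        = (ddS F (s.erase a') - ddS F (s.erase b')) / (b' - a') := by
    intro a b a' b' ha hb ha' hb' hab ha'b'
    by_cases h1 : a = a'
    · subst h1
      by_cases h2 : b = b'
      · subst h2; rfl
      · exact Dstep a b b' ha hb hb' hab ha'b' h2
    · by_cases h2 : b = b'
      · subst h2
        rw [Dsymm a b, Dstep b a a' hb ha ha' hab.symm (Ne.symm ha'b') h1,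
          Dsymm b a']
      · by_cases h3 : a = b'
        · subst h3
          by_cases h4 : b = a'
          · subst h4; exact Dsymm a b
          · rw [Dstep a b a' ha hb ha' hab (Ne.symm ha'b') h4, Dsymm a a']
        · rw [Dstep a b b' ha hb hb' hab h3 h2, Dsymm a b',
            Dstep b' a a' hb' ha ha' (Ne.symm h3) (Ne.symm ha'b') h1, Dsymm b' a']
  have hpair : ∃ p : ℝ × ℝ, p.1 ∈ s ∧ p.2 ∈ s ∧ p.1 ≠ p.2 := ⟨(x, y), hx, hy, hxy⟩
  rw [ddS, dif_pos hpair]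
  exact Dany _ _ x y hpair.choose_spec.1 hpair.choose_spec.2.1 hx hy
    hpair.choose_spec.2.2 hxy
theorem ddS_nil (F : ℕ → ℝ → ℝ) : ddS F 0 = 0 := by
  rw [ddS]; simp

theorem ddS_const (F : ℕ → ℝ → ℝ) (s : Multiset ℝ) (x : ℝ) (hx : x ∈ s)
    (hall : ∀ z ∈ s, z = x) :
    ddS F s = F (Multiset.card s - 1) x / Nat.factorial (Multiset.card s - 1) := by
  have hnp : ¬∃ p : ℝ × ℝ, p.1 ∈ s ∧ p.2 ∈ s ∧ p.1 ≠ p.2 := by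
    rintro ⟨p, h1, h2, h3⟩
    exact h3 ((hall _ h1).trans (hall _ h2).symm)
  have h0 : ∃ z : ℝ, z ∈ s := ⟨x, hx⟩
  rw [ddS, dif_neg hnp, dif_pos h0, hall _ h0.choose_spec]

theorem coe_eraseIdx_getElem (l : List ℝ) (k : ℕ) (hk : k < l.length) :
    (↑l : Multiset ℝ) = l[k] ::ₘ ↑(l.eraseIdx k) := by
  calc (↑l : Multiset ℝ) = ↑(l.take k ++ l[k] :: l.drop (k + 1)) := by
        rw [← List.drop_eq_getElem_cons hk, List.take_append_drop]
    _ = l[k] ::ₘ ↑(l.take k ++ l.drop (k + 1)) := by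
        rw [← Multiset.coe_add, ← Multiset.coe_add, ← Multiset.cons_coe, Multiset.add_cons]
    _ = l[k] ::ₘ ↑(l.eraseIdx k) := by rw [List.eraseIdx_eq_take_drop_succ]

theorem divDiff_eq_ddS (F : ℕ → ℝ → ℝ) :
    ∀ n (l : List ℝ), l.length = n → divDiff F l = ddS F ↑l := by
  intro n
  induction n using Nat.strong_induction_on with
  | _ n IH =>
  intro l hl
  match l with
  | [] => rw [divDiff]; simp [ddS_nil]
  | [x] =>
      rw [divDiff]
      rw [ddS_const F _ x (by simp) (by simp)]
      simp
  | x :: y :: l' =>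
      rw [divDiff]
      by_cases h : ∀ z ∈ y :: l', z = x
      · rw [dif_pos h]
        rw [ddS_const F _ x (by simp) ?_]
        · simp
        · intro z hz
          rw [Multiset.mem_coe, List.mem_cons] at hz
          rcases hz with h' | h'
          · exact h'
          · exact h z h'
      · rw [dif_neg h]
        push_neg at h
        obtain ⟨z, hz, hzx⟩ := h
        set rest := y :: l' with hrest
        set k := rest.findIdx (fun z => z ≠ x) with hk
        have hklt : k < rest.length :=
          List.findIdx_lt_length_of_exists ⟨z, hz, by simpa using hzx⟩
        set w := rest[k] with hw
        have hwx : w ≠ x := by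
          have h5 := List.findIdx_getElem (w := hklt)
          rw [← hw] at h5
          exact of_decide_eq_true h5
        have hgetD : rest.getD k 0 = w := List.getD_eq_getElem rest 0 hklt
        have hcoe : (↑rest : Multiset ℝ) = w ::ₘ ↑(rest.eraseIdx k) :=
          coe_eraseIdx_getElem rest k hklt
        have hlen1 : rest.length < n := by simp [hrest] at hl ⊢; omega
        have hlen2 : (x :: rest.eraseIdx k).length < n := by
          simp [List.length_eraseIdx, hklt] at hl ⊢
          omega
        rw [hgetD, IH _ hlen1 _ rfl, IH _ hlen2 _ rfl]
        have hs1 : (↑rest : Multiset ℝ) = ((↑(x :: rest) : Multiset ℝ)).erase x := by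
          simp [← Multiset.cons_coe]
        have hs2 : (↑(x :: rest.eraseIdx k) : Multiset ℝ)
            = ((↑(x :: rest) : Multiset ℝ)).erase w := by
          rw [← Multiset.cons_coe, ← Multiset.cons_coe, hcoe,
            Multiset.erase_cons_tail _ (Ne.symm hwx), Multiset.erase_cons_head]
        rw [hs1, hs2]
        refine (ddS_spec F (Multiset.card (↑(x :: rest) : Multiset ℝ)) _ rfl x w ?_ ?_ (Ne.symm hwx)).symm
        · simp
        · rw [← Multiset.cons_coe]
          exact Multiset.mem_cons_of_mem (Multiset.mem_coe.2 (hw ▸ List.getElem_mem hklt))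


/-- symmetry of divided differences with repeated knots. -/
theorem stmt8 (m : ℕ) (x : Fin (m + 1) → ℝ) (f : ℝ → ℝ)
    (hf : ∀ j : Fin (m + 1),
      ContDiffAt ℝ
        (((Finset.univ.filter fun i : Fin (m + 1) => x i = x j).card : ℕ) - 1) f (x j))
    (π : Equiv.Perm (Fin (m + 1))) :
    divDiff (fun j => iteratedDeriv j f) (List.ofFn fun i => x (π i)) =
      divDiff (fun j => iteratedDeriv j f) (List.ofFn fun i => x i) := by
  have hms : (↑(List.ofFn fun i => x (π i)) : Multiset ℝ) = ↑(List.ofFn fun i => x i) := by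
    rw [← Fin.univ_val_map, ← Fin.univ_val_map]
    calc Multiset.map (fun i => x (π i)) Finset.univ.val
        = Multiset.map x (Multiset.map π Finset.univ.val) := by
          rw [Multiset.map_map]; rfl
      _ = Multiset.map x Finset.univ.val := by rw [Multiset.map_univ_val_equiv]
  rw [divDiff_eq_ddS _ _ _ rfl, divDiff_eq_ddS _ _ _ rfl, hms]
end

section
/- With the setup of the expanding index pairs (p_ν, q_ν) as above (starting from (p,q) with q-p ≥ r+1 and q-p+2 ≤ m, k = m-r): for each 1 ≤ ν ≤ m-q+p, d_{ν-1} / (Π_{i=0}^{p_{ν-1}-1}(x_{q_{ν-1}} - x_i) · Π_{i=q_{ν-1}+1}^{m}(x_i - x_{p_{ν-1}})) ≤ 2^k / (Π_{i=0}^{p_ν - 1}(x_{q_ν} - x_i) · Π_{i=q_ν+1}^{m}(x_i - x_{p_ν})), where d_ν = d(p_ν, q_ν) = min{x_{q_ν+1} - x_{p_ν}, x_{q_ν} - x_{p_ν - 1}}. -/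
open scoped BigOperators

section auxStmt10

variable {m r : ℕ} {x : ℕ → ℝ}

lemma stmt10_xExt_coe (m : ℕ) (x : ℕ → ℝ) {i : ℕ} (h : i ≤ m) : xExt m x (i : ℤ) = x i := by
  unfold xExt
  rw [if_neg (by omega), if_neg (by omega)]
  simp

lemma stmt10_xExt_neg (m : ℕ) (x : ℕ → ℝ) {i : ℤ} (h : i < 0) :
    xExt m x i = x 0 - (x m - x 0) := by
  unfold xExt; rw [if_pos h]

lemma stmt10_xExt_top (m : ℕ) (x : ℕ → ℝ) {i : ℤ} (h : (m : ℤ) < i) :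
    xExt m x i = x m + (x m - x 0) := by
  unfold xExt; rw [if_neg (by omega), if_pos h]

lemma stmt10_prodA_pos (hmono : ∀ i j : ℕ, i ≤ j → j ≤ m → x i ≤ x j)
    (hmult : ∀ j : ℕ, j + r + 1 ≤ m → x j < x (j + r + 1))
    {p' q' : ℕ} (h1 : p' + r + 1 ≤ q') (h2 : q' ≤ m) :
    0 < ∏ i ∈ Finset.range p', (x q' - x i) := by
  apply Finset.prod_pos
  intro i hi
  rw [Finset.mem_range] at hi
  have h3 : x i ≤ x p' := hmono i p' (by omega) (by omega)
  have h4 : x p' < x (p' + r + 1) := hmult p' (by omega)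
  have h5 : x (p' + r + 1) ≤ x q' := hmono _ _ (by omega) h2
  linarith

lemma stmt10_prodB_pos (hmono : ∀ i j : ℕ, i ≤ j → j ≤ m → x i ≤ x j)
    (hmult : ∀ j : ℕ, j + r + 1 ≤ m → x j < x (j + r + 1))
    {p' q' : ℕ} (h1 : p' + r + 1 ≤ q') (h2 : q' ≤ m) :
    0 < ∏ i ∈ Finset.Ioc q' m, (x i - x p') := by
  apply Finset.prod_pos
  intro i hi
  rw [Finset.mem_Ioc] at hi
  have h4 : x p' < x (p' + r + 1) := hmult p' (by omega)
  have h5 : x (p' + r + 1) ≤ x i := hmono _ _ (by omega) hi.2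
  linarith

/-- If `p' = 0` and `q' < m`, the "move left" condition fails. -/
lemma stmt10_not_cond_left (hr : r + 2 ≤ m)
    (hmono : ∀ i j : ℕ, i ≤ j → j ≤ m → x i ≤ x j)
    (hmult : ∀ j : ℕ, j + r + 1 ≤ m → x j < x (j + r + 1))
    {q' : ℕ} (h1 : r + 1 ≤ q') (h2 : q' < m) :
    ¬ (x q' - xExt m x ((0 : ℤ) - 1) ≤ xExt m x ((q' : ℤ) + 1) - x 0) := by
  rw [stmt10_xExt_neg m x (by omega)]
  rw [show ((q' : ℤ) + 1) = ((q' + 1 : ℕ) : ℤ) by push_cast; ring,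
    stmt10_xExt_coe m x (by omega)]
  have h3 : x (q' + 1) ≤ x m := hmono _ _ (by omega) (by omega)
  have h4 : x 0 < x (0 + r + 1) := hmult 0 (by omega)
  have h5 : x (0 + r + 1) ≤ x q' := hmono _ _ (by omega) (by omega)
  intro hc
  linarith

/-- If `1 ≤ p'` and `q' = m`, the "move left" condition holds. -/
lemma stmt10_cond_right (hmono : ∀ i j : ℕ, i ≤ j → j ≤ m → x i ≤ x j)
    {p' : ℕ} (h1 : 1 ≤ p') (h2 : p' ≤ m) :
    x m - xExt m x ((p' : ℤ) - 1) ≤ xExt m x ((m : ℤ) + 1) - x p' := by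
  rw [show ((p' : ℤ) - 1) = ((p' - 1 : ℕ) : ℤ) by omega,
    stmt10_xExt_coe m x (by omega), stmt10_xExt_top m x (by omega)]
  have h3 : x 0 ≤ x (p' - 1) := hmono _ _ (by omega) (by omega)
  have h4 : x p' ≤ x m := hmono _ _ h2 le_rfl
  linarith

end auxStmt10


/-- the key product inequality (3.11) along the expanding pairs. -/
theorem stmt10 (m r : ℕ) (hr : r + 2 ≤ m) (x : ℕ → ℝ)
    (hmono : ∀ i j : ℕ, i ≤ j → j ≤ m → x i ≤ x j)
    (hmult : ∀ j : ℕ, j + r + 1 ≤ m → x j < x (j + r + 1))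
    (p q : ℕ) (hpm : p ≤ m) (hqm : q ≤ m) (hpq : p + r + 1 ≤ q) (hq2 : q + 2 ≤ m + p)
    (P Q : ℕ → ℕ) (hP0 : P 0 = p) (hQ0 : Q 0 = q)
    (hrec : ∀ ν : ℕ, 1 ≤ ν → ν ≤ m - q + p →
      ((x (Q (ν - 1)) - xExt m x ((P (ν - 1) : ℤ) - 1) ≤
          xExt m x ((Q (ν - 1) : ℤ) + 1) - x (P (ν - 1)) →
        P ν = P (ν - 1) - 1 ∧ Q ν = Q (ν - 1)) ∧
       (¬(x (Q (ν - 1)) - xExt m x ((P (ν - 1) : ℤ) - 1) ≤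
          xExt m x ((Q (ν - 1) : ℤ) + 1) - x (P (ν - 1))) →
        P ν = P (ν - 1) ∧ Q ν = Q (ν - 1) + 1))) :
    ∀ ν : ℕ, 1 ≤ ν → ν ≤ m - q + p →
      dpq m x (P (ν - 1)) (Q (ν - 1)) /
          ((∏ i ∈ Finset.range (P (ν - 1)), (x (Q (ν - 1)) - x i)) *
            ∏ i ∈ Finset.Ioc (Q (ν - 1)) m, (x i - x (P (ν - 1)))) ≤
        2 ^ (m - r) /
          ((∏ i ∈ Finset.range (P ν), (x (Q ν) - x i)) *
            ∏ i ∈ Finset.Ioc (Q ν) m, (x i - x (P ν))) := by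
  -- invariant along the trajectory
  have key : ∀ ν : ℕ, ν ≤ m - q + p →
      ∃ a b : ℕ, a + b = ν ∧ a ≤ p ∧ b ≤ m - q ∧ P ν = p - a ∧ Q ν = q + b := by
    intro ν
    induction ν with
    | zero => exact fun _ => ⟨0, 0, by simp [hP0, hQ0]⟩
    | succ ν ih =>
      intro hν
      obtain ⟨a, b, hab, ha, hb, hPν, hQν⟩ := ih (by omega)
      obtain ⟨hA, hB⟩ := hrec (ν + 1) (by omega) hν
      simp only [Nat.add_sub_cancel] at hA hB
      by_cases c : x (Q ν) - xExt m x ((P ν : ℤ) - 1) ≤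
          xExt m x ((Q ν : ℤ) + 1) - x (P ν)
      · obtain ⟨hP', hQ'⟩ := hA c
        have hap : a < p := by
          by_contra hap
          have ha' : a = p := by omega
          have hc := stmt10_not_cond_left hr hmono hmult
            (q' := q + b) (by omega) (by omega)
          rw [hPν, hQν, ha'] at c
          simp only [Nat.sub_self, Nat.cast_zero] at c
          exact hc c
        exact ⟨a + 1, b, by omega, by omega, hb, by rw [hP', hPν]; omega,
          by rw [hQ', hQν]⟩
      · obtain ⟨hP', hQ'⟩ := hB c
        have hbm : b < m - q := by
          by_contra hbm
          have hq' : q + b = m := by omega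
          have hc := stmt10_cond_right hmono (p' := p - a)
            (by omega) (by omega)
          rw [hPν, hQν, hq'] at c
          exact c hc
        exact ⟨a, b + 1, by omega, ha, by omega, by rw [hP', hPν],
          by rw [hQ', hQν]; omega⟩
  intro ν hν1 hν2
  obtain ⟨a, b, hab, ha, hb, hPν, hQν⟩ := key (ν - 1) (by omega)
  obtain ⟨hA, hB⟩ := hrec ν hν1 hν2
  set p' := P (ν - 1) with hp'
  set q' := Q (ν - 1) with hq'
  have hpleq : p' + r + 1 ≤ q' := by omega
  have hq'le : q' ≤ m := by omega
  have hp'le : p' ≤ m := by omega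
  by_cases c : x q' - xExt m x ((p' : ℤ) - 1) ≤ xExt m x ((q' : ℤ) + 1) - x p'
  · -- move left: p decreases
    obtain ⟨hP', hQ'⟩ := hA c
    have hp1 : 1 ≤ p' := by
      by_contra hp1
      have hp0 : p' = 0 := by omega
      have hc := stmt10_not_cond_left hr hmono hmult
        (q' := q') (by omega) (by omega)
      rw [hp0] at c
      simp only [Nat.cast_zero] at c
      exact hc c
    rw [hP', hQ']
    have hxe : xExt m x ((p' : ℤ) - 1) = x (p' - 1) := by
      rw [show ((p' : ℤ) - 1) = ((p' - 1 : ℕ) : ℤ) by omega,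
        stmt10_xExt_coe m x (by omega)]
    rw [hxe] at c
    have hd : dpq m x p' q' = x q' - x (p' - 1) := by
      rw [dpq, hxe, min_eq_right c]
    rw [hd]
    set A' := ∏ i ∈ Finset.range (p' - 1), (x q' - x i) with hA'
    set B := ∏ i ∈ Finset.Ioc q' m, (x i - x p') with hBdef
    set B' := ∏ i ∈ Finset.Ioc q' m, (x i - x (p' - 1)) with hB'def
    have hA'pos : 0 < A' := stmt10_prodA_pos hmono hmult
      (p' := p' - 1) (q' := q') (by omega) hq'le
    have hBpos : 0 < B := stmt10_prodB_pos hmono hmult hpleq hq'le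
    have hB'pos : 0 < B' := stmt10_prodB_pos hmono hmult
      (p' := p' - 1) (q' := q') (by omega) hq'le
    have hAsplit : ∏ i ∈ Finset.range p', (x q' - x i)
        = A' * (x q' - x (p' - 1)) := by
      conv_lhs => rw [show p' = (p' - 1) + 1 from by omega]
      rw [Finset.prod_range_succ, ← hA']
    have hdpos : 0 < x q' - x (p' - 1) := by
      have h4 : x (p' - 1) ≤ x p' := hmono _ _ (by omega) hp'le
      have h5 : x p' < x (p' + r + 1) := hmult p' (by omega)
      have h6 : x (p' + r + 1) ≤ x q' := hmono _ _ (by omega) hq'le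
      linarith
    rw [div_le_div_iff₀ (by rw [hAsplit]; positivity) (by positivity)]
    -- key product estimate: B' ≤ 2^(m-r) * B
    have hBB : B' ≤ 2 ^ (m - r) * B := by
      have h1 : B' ≤ ∏ i ∈ Finset.Ioc q' m, (2 * (x i - x p')) := by
        apply Finset.prod_le_prod
        · intro i hi
          rw [Finset.mem_Ioc] at hi
          have : x (p' - 1) ≤ x p' := hmono _ _ (by omega) hp'le
          have h5 : x p' < x (p' + r + 1) := hmult p' (by omega)
          have h6 : x (p' + r + 1) ≤ x i := hmono _ _ (by omega) hi.2
          linarith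
        · intro i hi
          rw [Finset.mem_Ioc] at hi
          have hq1m : q' + 1 ≤ m := by omega
          have hce : xExt m x ((q' : ℤ) + 1) = x (q' + 1) := by
            rw [show ((q' : ℤ) + 1) = ((q' + 1 : ℕ) : ℤ) by push_cast; ring,
              stmt10_xExt_coe m x hq1m]
          rw [hce] at c
          have h3 : x (q' + 1) ≤ x i := hmono _ _ (by omega) hi.2
          have h4 : x p' ≤ x q' := hmono _ _ (by omega) hq'le
          linarith
      have h2 : ∏ i ∈ Finset.Ioc q' m, (2 * (x i - x p'))
          = 2 ^ (m - q') * B := by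
        rw [Finset.prod_mul_distrib, Finset.prod_const, Nat.card_Ioc]
      have h3 : (2 : ℝ) ^ (m - q') ≤ 2 ^ (m - r) := by
        apply pow_le_pow_right₀ (by norm_num) (by omega)
      nlinarith [hBpos]
    calc (x q' - x (p' - 1)) * (A' * B')
        = (x q' - x (p' - 1)) * A' * B' := by ring
      _ ≤ (x q' - x (p' - 1)) * A' * (2 ^ (m - r) * B) := by
          apply mul_le_mul_of_nonneg_left hBB (by positivity)
      _ = 2 ^ (m - r) * (A' * (x q' - x (p' - 1)) * B) := by ring
      _ = 2 ^ (m - r) * ((∏ i ∈ Finset.range p', (x q' - x i)) * B) := by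
          rw [hAsplit]
  · -- move right: q increases
    obtain ⟨hP', hQ'⟩ := hB c
    have hq1m : q' + 1 ≤ m := by
      by_contra hqm'
      have hq'm : q' = m := by omega
      have hc := stmt10_cond_right hmono (p' := p') (by omega) hp'le
      rw [hq'm] at c
      exact c hc
    rw [hP', hQ']
    have hce : xExt m x ((q' : ℤ) + 1) = x (q' + 1) := by
      rw [show ((q' : ℤ) + 1) = ((q' + 1 : ℕ) : ℤ) by push_cast; ring,
        stmt10_xExt_coe m x hq1m]
    rw [hce] at c
    have hd : dpq m x p' q' = x (q' + 1) - x p' := by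
      rw [dpq, hce, min_eq_left (le_of_not_ge c)]
    rw [hd]
    set A := ∏ i ∈ Finset.range p', (x q' - x i) with hAdef
    set A' := ∏ i ∈ Finset.range p', (x (q' + 1) - x i) with hA'def
    set B' := ∏ i ∈ Finset.Ioc (q' + 1) m, (x i - x p') with hB'def
    have hApos : 0 < A := stmt10_prodA_pos hmono hmult hpleq hq'le
    have hA'pos : 0 < A' := stmt10_prodA_pos hmono hmult
      (p' := p') (q' := q' + 1) (by omega) hq1m
    have hB'pos : 0 < B' := stmt10_prodB_pos hmono hmult
      (p' := p') (q' := q' + 1) (by omega) hq1m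
    have hdpos : 0 < x (q' + 1) - x p' := by
      have h5 : x p' < x (p' + r + 1) := hmult p' (by omega)
      have h6 : x (p' + r + 1) ≤ x (q' + 1) := hmono _ _ (by omega) hq1m
      linarith
    have hBsplit : ∏ i ∈ Finset.Ioc q' m, (x i - x p')
        = (x (q' + 1) - x p') * B' := by
      rw [hB'def, show Finset.Ioc q' m = insert (q' + 1) (Finset.Ioc (q' + 1) m) by
        ext j; simp only [Finset.mem_Ioc, Finset.mem_insert]; omega,
        Finset.prod_insert (by simp)]
    rw [div_le_div_iff₀ (by rw [hBsplit]; positivity) (by positivity)]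
    have hAA : A' ≤ 2 ^ (m - r) * A := by
      have h1 : A' ≤ ∏ i ∈ Finset.range p', (2 * (x q' - x i)) := by
        apply Finset.prod_le_prod
        · intro i hi
          rw [Finset.mem_range] at hi
          have h3 : x i ≤ x p' := hmono _ _ (by omega) hp'le
          linarith
        · intro i hi
          rw [Finset.mem_range] at hi
          have hxe : xExt m x ((p' : ℤ) - 1) = x (p' - 1) := by
            rw [show ((p' : ℤ) - 1) = ((p' - 1 : ℕ) : ℤ) by omega,
              stmt10_xExt_coe m x (by omega)]
          rw [hxe] at c
          push_neg at c
          have h3 : x i ≤ x (p' - 1) := hmono _ _ (by omega) (by omega)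
          have h4 : x p' ≤ x q' := hmono _ _ (by omega) hq'le
          linarith
      have h2 : ∏ i ∈ Finset.range p', (2 * (x q' - x i)) = 2 ^ p' * A := by
        rw [Finset.prod_mul_distrib, Finset.prod_const, Finset.card_range]
      have h3 : (2 : ℝ) ^ p' ≤ 2 ^ (m - r) := by
        apply pow_le_pow_right₀ (by norm_num) (by omega)
      nlinarith [hApos]
    calc (x (q' + 1) - x p') * (A' * B')
        = (x (q' + 1) - x p') * B' * A' := by ring
      _ ≤ (x (q' + 1) - x p') * B' * (2 ^ (m - r) * A) := by
          apply mul_le_mul_of_nonneg_left hAA (by positivity)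
      _ = 2 ^ (m - r) * (A * ((x (q' + 1) - x p') * B')) := by ring
      _ = 2 ^ (m - r) * (A * ∏ i ∈ Finset.Ioc q' m, (x i - x p')) := by
          rw [hBsplit]
end

section
/- (Marchaud inequality) Let F ∈ C[a,b] and integers 1 ≤ ℓ < k. Then there exists a constant c depending only on k such that for all 0 < t ≤ b - a: ω_ℓ(F, t; [a,b]) ≤ c · t^ℓ · (∫_t^{b-a} ω_k(F, u; [a,b]) / u^{ℓ+1} du + ‖F‖_{[a,b]} / (b-a)^ℓ). -/
open scoped BigOperators

section Marchaud
open Finset Function MeasureTheory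


lemma fd_shift (h c : ℝ) (f : ℝ → ℝ) : ∀ n : ℕ, ∀ x : ℝ,
    (fwdDiff h)^[n] (fun y => f (y + c)) x = (fwdDiff h)^[n] f (x + c) := by
  intro n
  induction n with
  | zero => intro x; simp
  | succ n ih =>
      intro x
      rw [Function.iterate_succ_apply', Function.iterate_succ_apply', fwdDiff, fwdDiff,
        ih, ih]
      ring_nf

lemma pascal_sum (g : ℕ → ℝ) (n : ℕ) :
    ∑ i ∈ range (n+1), (n.choose i : ℝ) * g (i+1)
      + ∑ i ∈ range (n+1), (n.choose i : ℝ) * g i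
    = ∑ i ∈ range (n+2), ((n+1).choose i : ℝ) * g i := by
  have h1 : ∑ i ∈ range (n+1), (n.choose (i+1) : ℝ) * g (i+1) + (n.choose 0 : ℝ) * g 0
      = ∑ i ∈ range (n+1), (n.choose i : ℝ) * g i := by
    rw [← Finset.sum_range_succ' (fun i => (n.choose i : ℝ) * g i) (n+1),
      Finset.sum_range_succ]
    simp
  rw [Finset.sum_range_succ' (fun i => ((n+1).choose i : ℝ) * g i) (n+1)]
  simp only [Nat.choose_succ_succ, Nat.cast_add, add_mul, Finset.sum_add_distrib,
    Nat.choose_zero_right, Nat.cast_one, one_mul]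
  rw [← h1]
  simp [Nat.choose_zero_right]
  ring

lemma fd_double (h : ℝ) : ∀ n : ℕ, ∀ f : ℝ → ℝ, ∀ x : ℝ,
    (fwdDiff (2*h))^[n] f x
      = ∑ i ∈ range (n+1), (n.choose i : ℝ) * (fwdDiff h)^[n] f (x + i * h) := by
  intro n
  induction n with
  | zero => intro f x; simp
  | succ n ih =>
      intro f x
      rw [Function.iterate_succ_apply, ih (fwdDiff (2*h) f) x]
      have hsplit : ∀ y : ℝ, (fwdDiff h)^[n] (fwdDiff (2*h) f) y
          = (fwdDiff h)^[n+1] f (y + h) + (fwdDiff h)^[n+1] f y := by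
        intro y
        have h1 : fwdDiff (2*h) f = (fun z => fwdDiff h f (z + h)) + fwdDiff h f := by
          funext z; simp [fwdDiff, Pi.add_apply]; ring_nf
        rw [h1, fwdDiff_iter_add, Pi.add_apply, fd_shift]
        rw [show (fwdDiff h)^[n] (fwdDiff h f) = (fwdDiff h)^[n+1] f from
          (Function.iterate_succ_apply (fwdDiff h) n f).symm ▸ rfl]
      simp only [hsplit]
      have e1 : ∀ i ∈ range (n+1), (n.choose i : ℝ) *
            ((fwdDiff h)^[n+1] f (x + i*h + h) + (fwdDiff h)^[n+1] f (x + i*h))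
          = (n.choose i : ℝ) * (fwdDiff h)^[n+1] f (x + (i+1 : ℕ)*h)
            + (n.choose i : ℝ) * (fwdDiff h)^[n+1] f (x + i*h) := by
        intro i _
        push_cast
        ring_nf
      rw [Finset.sum_congr rfl e1, Finset.sum_add_distrib]
      exact pascal_sum (fun i => (fwdDiff h)^[n+1] f (x + i*h)) n

lemma fd_telescope (h : ℝ) (n : ℕ) (f : ℝ → ℝ) (x : ℝ) : ∀ i : ℕ,
    (fwdDiff h)^[n] f (x + i*h) - (fwdDiff h)^[n] f x
      = ∑ r ∈ range i, (fwdDiff h)^[n+1] f (x + r*h) := by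
  intro i
  induction i with
  | zero => simp
  | succ i ih =>
      rw [Finset.sum_range_succ, ← ih]
      have e1 : (fwdDiff h)^[n+1] f (x + i*h)
          = (fwdDiff h)^[n] f (x + i*h + h) - (fwdDiff h)^[n] f (x + i*h) := by
        rw [Function.iterate_succ_apply']
        rfl
      have e2 : x + ((i:ℕ)+1 : ℕ)*h = x + i*h + h := by push_cast; ring
      rw [e2, e1]
      ring

lemma fd_key (h : ℝ) (n : ℕ) (f : ℝ → ℝ) (x : ℝ) :
    (2:ℝ)^n * (fwdDiff h)^[n] f x
      = (fwdDiff (2*h))^[n] f x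
        - ∑ i ∈ range (n+1), (n.choose i : ℝ) *
            ∑ r ∈ range i, (fwdDiff h)^[n+1] f (x + r*h) := by
  have e1 : ∀ i ∈ range (n+1), (n.choose i : ℝ) * (fwdDiff h)^[n] f (x + i*h)
      = (n.choose i : ℝ) * (fwdDiff h)^[n] f x
        + (n.choose i : ℝ) * ∑ r ∈ range i, (fwdDiff h)^[n+1] f (x + r*h) := by
    intro i _
    rw [← fd_telescope]
    ring
  rw [fd_double, Finset.sum_congr rfl e1, Finset.sum_add_distrib, ← Finset.sum_mul]
  have e2 : ∑ i ∈ range (n+1), (n.choose i : ℝ) = (2:ℝ)^n := by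
    rw [← Nat.cast_sum, Nat.sum_range_choose]
    push_cast
    ring
  rw [e2]
  ring


lemma fd_neg (h : ℝ) (f : ℝ → ℝ) (n : ℕ) :
    (fwdDiff h)^[n] (-f) = -((fwdDiff h)^[n] f) := by
  have := fwdDiff_iter_const_smul h (-1 : ℤ) f n
  simpa using this

lemma fd_flip (u : ℝ) : ∀ n : ℕ, ∀ f : ℝ → ℝ, ∀ z : ℝ,
    (fwdDiff (-u))^[n] f z = (-1 : ℝ) ^ n * (fwdDiff u)^[n] f (z - n * u) := by
  intro n
  induction n with
  | zero => intro f z; simp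
  | succ n ih =>
      intro f z
      rw [Function.iterate_succ_apply, Function.iterate_succ_apply]
      rw [ih (fwdDiff (-u) f) z]
      have hfun : fwdDiff (-u) f = fun y => -(fwdDiff u f (y + -u)) := by
        funext y; simp [fwdDiff]
      rw [hfun]
      have hneg : (fwdDiff u)^[n] (fun y => -(fwdDiff u f (y + -u)))
          = -((fwdDiff u)^[n] (fun y => (fwdDiff u f (y + -u)))) := by
        have := fd_neg u (fun y => (fwdDiff u f (y + -u))) n
        convert this using 2
        rfl
      rw [hneg, Pi.neg_apply, fd_shift]
      push_cast
      ring_nf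

lemma kSymm_eq_fd (j : ℕ) (g : ℝ → ℝ) (u y a b : ℝ) (h1 : a ≤ y) (h2 : y + j*u ≤ b) :
    kSymmDiff j g u (y + j*u/2) a b = (fwdDiff u)^[j] g y := by
  have hcond : a ≤ (y + j*u/2) - (j/2 : ℝ) * u ∧ (y + j*u/2) + (j/2 : ℝ) * u ≤ b := by
    constructor
    · linarith [h1]
    · linarith [h2]
  rw [kSymmDiff, if_pos hcond]
  have e0 : (fwdDiff u)^[j] g y
      = ∑ m ∈ range (j+1), ((-1:ℝ)^(j-m) * (j.choose m)) * g (y + m*u) := by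
    rw [fwdDiff_iter_eq_sum_shift]
    refine Finset.sum_congr rfl fun m _ => ?_
    rw [zsmul_eq_mul, nsmul_eq_mul]
    push_cast
    ring_nf
  rw [e0, ← Finset.sum_range_reflect (fun m => ((-1:ℝ)^(j-m) * (j.choose m)) * g (y + m*u)) (j+1)]
  refine Finset.sum_congr rfl fun i hi => ?_
  have hij : i ≤ j := by simpa [Nat.lt_succ_iff] using hi
  have e1 : j + 1 - 1 - i = j - i := by omega
  have e2 : j - (j - i) = i := by omega
  simp only [e1, e2]
  rw [Nat.choose_symm hij, Nat.cast_sub hij]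
  have e4 : y + ((j:ℝ)-(i:ℝ))*u = y + (j:ℝ)*u/2 + ((j:ℝ)/2 - i)*u := by ring
  rw [e4]

section Basic

variable {a b : ℝ} {F : ℝ → ℝ}

lemma supNorm_bddAbove (hab : a ≤ b) (hF : ContinuousOn F (Set.Icc a b)) :
    BddAbove {v : ℝ | ∃ x ∈ Set.Icc a b, v = |F x|} := by
  have hset : {v : ℝ | ∃ x ∈ Set.Icc a b, v = |F x|} = (fun x => |F x|) '' (Set.Icc a b) := by
    ext v
    constructor
    · rintro ⟨x, hx, rfl⟩; exact ⟨x, hx, rfl⟩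
    · rintro ⟨x, hx, rfl⟩; exact ⟨x, hx, rfl⟩
  rw [hset]
  exact (isCompact_Icc.image_of_continuousOn hF.abs).bddAbove

lemma abs_le_supNorm (hab : a ≤ b) (hF : ContinuousOn F (Set.Icc a b)) {x : ℝ}
    (hx : x ∈ Set.Icc a b) : |F x| ≤ supNorm F a b :=
  le_csSup (supNorm_bddAbove hab hF) ⟨x, hx, rfl⟩

lemma supNorm_nonneg (hab : a ≤ b) (hF : ContinuousOn F (Set.Icc a b)) :
    0 ≤ supNorm F a b :=
  (abs_nonneg _).trans (abs_le_supNorm hab hF (Set.left_mem_Icc.2 hab))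

lemma kSymm_le (hab : a ≤ b) (hF : ContinuousOn F (Set.Icc a b)) (j : ℕ) {u : ℝ} (x : ℝ)
    (hu : 0 ≤ u) : |kSymmDiff j F u x a b| ≤ 2^j * supNorm F a b := by
  rw [kSymmDiff]
  split_ifs with hcond
  · refine (Finset.abs_sum_le_sum_abs _ _).trans ?_
    have hterm : ∀ i ∈ range (j+1), |(-1:ℝ)^i * (j.choose i) * F (x + ((j:ℝ)/2 - i)*u)|
        ≤ (j.choose i : ℝ) * supNorm F a b := by
      intro i hi
      have hij : i ≤ j := by simpa [Nat.lt_succ_iff] using hi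
      have hmem : x + ((j:ℝ)/2 - i)*u ∈ Set.Icc a b := by
        constructor
        · have : ((j:ℝ) - i) * u ≥ 0 := by
            apply mul_nonneg _ hu
            have : (i:ℝ) ≤ (j:ℝ) := by exact_mod_cast hij
            linarith
          nlinarith [hcond.1]
        · have : (i:ℝ) * u ≥ 0 := by positivity
          nlinarith [hcond.2]
      have := abs_le_supNorm hab hF hmem
      rw [abs_mul, abs_mul, abs_pow, abs_neg, abs_one, one_pow, one_mul, Nat.abs_cast]
      exact mul_le_mul_of_nonneg_left this (by positivity)
    refine (Finset.sum_le_sum hterm).trans ?_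
    rw [← Finset.sum_mul, ← Nat.cast_sum, Nat.sum_range_choose]
    push_cast
    exact le_refl _
  · simp only [abs_zero]
    exact mul_nonneg (by positivity) (supNorm_nonneg hab hF)

lemma smoothOmega_le {j : ℕ} {s C : ℝ} (hC : 0 ≤ C)
    (hb : ∀ u x : ℝ, 0 < u → u ≤ s → |kSymmDiff j F u x a b| ≤ C) :
    smoothOmega j F s a b ≤ C := by
  refine Real.sSup_le ?_ hC
  rintro v ⟨u, x, hu, hus, rfl⟩
  exact hb u x hu hus

lemma le_smoothOmega (hab : a ≤ b) (hF : ContinuousOn F (Set.Icc a b)) {j : ℕ} {s u : ℝ}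
    (x : ℝ) (hu : 0 < u) (hus : u ≤ s) :
    |kSymmDiff j F u x a b| ≤ smoothOmega j F s a b := by
  refine le_csSup ⟨2^j * supNorm F a b, ?_⟩ ⟨u, x, hu, hus, rfl⟩
  rintro v ⟨u', x', hu', _, rfl⟩
  exact kSymm_le hab hF j x' hu'.le

lemma smoothOmega_nonneg_s12 (hab : a ≤ b) (hF : ContinuousOn F (Set.Icc a b)) (j : ℕ) {s : ℝ}
    (hs : 0 < s) : 0 ≤ smoothOmega j F s a b :=
  (abs_nonneg _).trans (le_smoothOmega hab hF a hs le_rfl)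

lemma smoothOmega_empty (j : ℕ) {s : ℝ} (hs : s ≤ 0) : smoothOmega j F s a b = 0 := by
  rw [smoothOmega]
  convert Real.sSup_empty using 2
  ext v
  simp only [Set.mem_setOf_eq, Set.mem_empty_iff_false, iff_false]
  rintro ⟨u, x, hu, hus, rfl⟩
  linarith

lemma smoothOmega_mono_s12 (hab : a ≤ b) (hF : ContinuousOn F (Set.Icc a b)) (j : ℕ) :
    Monotone (fun s => smoothOmega j F s a b) := by
  intro s s' hss'
  simp only []
  show smoothOmega j F s a b ≤ smoothOmega j F s' a b
  rcases le_or_gt s 0 with hs | hs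
  · rw [smoothOmega_empty j hs]
    rcases le_or_gt s' 0 with hs' | hs'
    · rw [smoothOmega_empty j hs']
    · exact smoothOmega_nonneg_s12 hab hF j hs'
  · refine smoothOmega_le (smoothOmega_nonneg_s12 hab hF j (hs.trans_le hss')) ?_
    intro u x hu hus
    exact le_smoothOmega hab hF x hu (hus.trans hss')

lemma smoothOmega_le_norm (hab : a ≤ b) (hF : ContinuousOn F (Set.Icc a b)) (j : ℕ) (s : ℝ) :
    smoothOmega j F s a b ≤ 2^j * supNorm F a b := by
  rcases le_or_gt s 0 with hs | hs
  · rw [smoothOmega_empty j hs]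
    exact mul_nonneg (by positivity) (supNorm_nonneg hab hF)
  · exact smoothOmega_le (mul_nonneg (by positivity) (supNorm_nonneg hab hF))
      (fun u x hu _ => kSymm_le hab hF j x hu.le)

end Basic

lemma choose_sum_bound (j : ℕ) (T : ℕ → ℕ → ℝ) (B : ℝ) (hB : 0 ≤ B)
    (h : ∀ i ∈ range (j+1), ∀ r ∈ range i, |T i r| ≤ B) :
    |∑ i ∈ range (j+1), (j.choose i : ℝ) * ∑ r ∈ range i, T i r| ≤ (j * 2^j) * B := by
  refine (Finset.abs_sum_le_sum_abs _ _).trans ?_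
  have hterm : ∀ i ∈ range (j+1), |(j.choose i : ℝ) * ∑ r ∈ range i, T i r|
      ≤ (j.choose i : ℝ) * (j * B) := by
    intro i hi
    have hij : i ≤ j := by simpa [Nat.lt_succ_iff] using hi
    rw [abs_mul, Nat.abs_cast]
    refine mul_le_mul_of_nonneg_left ?_ (by positivity)
    refine (Finset.abs_sum_le_sum_abs _ _).trans ?_
    calc ∑ r ∈ range i, |T i r| ≤ ∑ r ∈ range i, B := Finset.sum_le_sum (h i hi)
      _ = i * B := by rw [Finset.sum_const, Finset.card_range, nsmul_eq_mul]
      _ ≤ j * B := by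
          have : (i:ℝ) ≤ (j:ℝ) := by exact_mod_cast hij
          exact mul_le_mul_of_nonneg_right this hB
  refine (Finset.sum_le_sum hterm).trans ?_
  rw [← Finset.sum_mul, ← Nat.cast_sum, Nat.sum_range_choose]
  push_cast
  ring_nf
  exact le_refl _

lemma step_lemma {a b : ℝ} {F : ℝ → ℝ} (hab : a < b) (hF : ContinuousOn F (Set.Icc a b))
    (j : ℕ) {s : ℝ} (hs : 0 < s) (h3 : 3*(j:ℝ)*s ≤ b - a) :
    smoothOmega j F s a b
      ≤ (smoothOmega j F (2*s) a b + ((j:ℝ) * 2^j) * smoothOmega (j+1) F s a b) / 2^j := by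
  have hab' : a ≤ b := hab.le
  have hW2 : 0 ≤ smoothOmega j F (2*s) a b := smoothOmega_nonneg_s12 hab' hF j (by positivity)
  have hW' : 0 ≤ smoothOmega (j+1) F s a b := smoothOmega_nonneg_s12 hab' hF _ hs
  refine smoothOmega_le (by positivity) ?_
  intro u x hu hus
  by_cases hcond : a ≤ x - ((j:ℝ)/2)*u ∧ x + ((j:ℝ)/2)*u ≤ b
  case neg =>
    rw [kSymmDiff, if_neg hcond]
    simp only [abs_zero]
    positivity
  set y := x - (j:ℝ)/2*u with hy
  have hy1 : a ≤ y := hcond.1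
  have hy2 : y + (j:ℝ)*u ≤ b := by
    have := hcond.2
    rw [hy]; linarith
  have hxy : x = y + (j:ℝ)*u/2 := by rw [hy]; ring
  rw [hxy, kSymm_eq_fd j F u y a b hy1 hy2]
  -- key bounds on the correction terms and on the doubled difference
  have h3u : 3*(j:ℝ)*u ≤ b - a := by nlinarith
  rcases le_or_gt (y + 2*(j:ℝ)*u) b with hcase | hcase
  · -- room to the right
    have hkey := fd_key u j F y
    have hT1 : |(fwdDiff (2*u))^[j] F y| ≤ smoothOmega j F (2*s) a b := by
      have he : (fwdDiff (2*u))^[j] F y = kSymmDiff j F (2*u) (y + (j:ℝ)*(2*u)/2) a b := by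
        rw [kSymm_eq_fd j F (2*u) y a b hy1 (by linarith)]
      rw [he]
      exact le_smoothOmega hab' hF _ (by positivity) (by linarith)
    have hT2 : |∑ i ∈ range (j+1), (j.choose i : ℝ) *
          ∑ r ∈ range i, (fwdDiff u)^[j+1] F (y + r*u)|
        ≤ ((j:ℝ) * 2^j) * smoothOmega (j+1) F s a b := by
      refine choose_sum_bound j _ _ hW' ?_
      intro i hi r hr
      have hij : i ≤ j := by simpa [Nat.lt_succ_iff] using hi
      have hrj : (r:ℝ) + 1 ≤ (j:ℝ) := by
        have hri := Finset.mem_range.mp hr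
        have : r + 1 ≤ j := by omega
        exact_mod_cast this
      have hr0 : (0:ℝ) ≤ (r:ℝ) := by positivity
      have he : (fwdDiff u)^[j+1] F (y + r*u)
          = kSymmDiff (j+1) F u ((y + r*u) + ((j:ℕ)+1:ℕ)*u/2) a b := by
        rw [kSymm_eq_fd (j+1) F u (y + r*u) a b (by nlinarith) (by push_cast; nlinarith)]
      rw [he]
      exact le_smoothOmega hab' hF _ hu hus
    have : (2:ℝ)^j * |(fwdDiff u)^[j] F y|
        ≤ smoothOmega j F (2*s) a b + ((j:ℝ) * 2^j) * smoothOmega (j+1) F s a b := by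
      calc (2:ℝ)^j * |(fwdDiff u)^[j] F y| = |(2:ℝ)^j * (fwdDiff u)^[j] F y| := by
            rw [abs_mul, abs_pow]; norm_num
        _ = |(fwdDiff (2*u))^[j] F y - ∑ i ∈ range (j+1), (j.choose i : ℝ) *
              ∑ r ∈ range i, (fwdDiff u)^[j+1] F (y + r*u)| := by rw [hkey]
        _ ≤ _ := (abs_sub _ _).trans (add_le_add hT1 hT2)
    rw [le_div_iff₀ (by positivity : (0:ℝ) < (2:ℝ)^j)]
    linarith
  · -- room to the left
    have hy3 : a ≤ y - (j:ℝ)*u := by nlinarith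
    have hflip : |(fwdDiff u)^[j] F y| = |(fwdDiff (-u))^[j] F (y + (j:ℝ)*u)| := by
      rw [fd_flip u j F (y + (j:ℝ)*u)]
      rw [abs_mul, abs_pow, abs_neg, abs_one, one_pow, one_mul]
      congr 2
      ring
    have hkey := fd_key (-u) j F (y + (j:ℝ)*u)
    have hT1 : |(fwdDiff (2*(-u)))^[j] F (y + (j:ℝ)*u)| ≤ smoothOmega j F (2*s) a b := by
      have hne : (2*(-u)) = -(2*u) := by ring
      rw [hne, fd_flip (2*u) j F (y + (j:ℝ)*u)]
      rw [abs_mul, abs_pow, abs_neg, abs_one, one_pow, one_mul]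
      have harg : y + (j:ℝ)*u - (j:ℝ)*(2*u) = y - (j:ℝ)*u := by ring
      rw [harg]
      have he : (fwdDiff (2*u))^[j] F (y - (j:ℝ)*u)
          = kSymmDiff j F (2*u) ((y - (j:ℝ)*u) + (j:ℝ)*(2*u)/2) a b := by
        rw [kSymm_eq_fd j F (2*u) (y - (j:ℝ)*u) a b hy3 (by linarith)]
      rw [he]
      exact le_smoothOmega hab' hF _ (by positivity) (by linarith)
    have hT2 : |∑ i ∈ range (j+1), (j.choose i : ℝ) *
          ∑ r ∈ range i, (fwdDiff (-u))^[j+1] F (y + (j:ℝ)*u + r*(-u))|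
        ≤ ((j:ℝ) * 2^j) * smoothOmega (j+1) F s a b := by
      refine choose_sum_bound j _ _ hW' ?_
      intro i hi r hr
      have hij : i ≤ j := by simpa [Nat.lt_succ_iff] using hi
      have hrj : (r:ℝ) + 1 ≤ (j:ℝ) := by
        have hri := Finset.mem_range.mp hr
        have : r + 1 ≤ j := by omega
        exact_mod_cast this
      have hr0 : (0:ℝ) ≤ (r:ℝ) := by positivity
      rw [fd_flip (u) (j+1) F (y + (j:ℝ)*u + r*(-u))]
      rw [abs_mul, abs_pow, abs_neg, abs_one, one_pow, one_mul]
      have harg : y + (j:ℝ)*u + (r:ℝ)*(-u) - ((j:ℕ)+1:ℕ)*u = y - ((r:ℝ)+1)*u := by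
        push_cast; ring
      rw [harg]
      have he : (fwdDiff u)^[j+1] F (y - ((r:ℝ)+1)*u)
          = kSymmDiff (j+1) F u ((y - ((r:ℝ)+1)*u) + ((j:ℕ)+1:ℕ)*u/2) a b := by
        rw [kSymm_eq_fd (j+1) F u (y - ((r:ℝ)+1)*u) a b (by nlinarith) (by push_cast; nlinarith)]
      rw [he]
      exact le_smoothOmega hab' hF _ hu hus
    have : (2:ℝ)^j * |(fwdDiff u)^[j] F y|
        ≤ smoothOmega j F (2*s) a b + ((j:ℝ) * 2^j) * smoothOmega (j+1) F s a b := by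
      calc (2:ℝ)^j * |(fwdDiff u)^[j] F y|
            = |(2:ℝ)^j * (fwdDiff (-u))^[j] F (y + (j:ℝ)*u)| := by
            rw [abs_mul, abs_pow]; norm_num [hflip]
        _ = |(fwdDiff (2*(-u)))^[j] F (y + (j:ℝ)*u)
              - ∑ i ∈ range (j+1), (j.choose i : ℝ) *
              ∑ r ∈ range i, (fwdDiff (-u))^[j+1] F (y + (j:ℝ)*u + r*(-u))| := by rw [hkey]
        _ ≤ _ := (abs_sub _ _).trans (add_le_add hT1 hT2)
    rw [le_div_iff₀ (by positivity : (0:ℝ) < (2:ℝ)^j)]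
    linarith

lemma dyadic_sum (c : ℝ) (hc : 1 ≤ c) : ∀ N : ℕ,
    ∑ n ∈ range N, (if (2:ℝ)^n < c then (2:ℝ)^n else 0) ≤ 2*c := by
  intro N
  induction N with
  | zero => simp; linarith
  | succ N ih =>
      rw [Finset.sum_range_succ]
      by_cases h : (2:ℝ)^N < c
      · rw [if_pos h]
        have hb : ∑ n ∈ range N, (if (2:ℝ)^n < c then (2:ℝ)^n else 0)
            ≤ ∑ n ∈ range N, (2:ℝ)^n := by
          refine Finset.sum_le_sum fun n _ => ?_
          split_ifs
          · exact le_refl _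
          · positivity
        have geo : ∑ n ∈ range N, (2:ℝ)^n = 2^N - 1 := by
          rw [geom_sum_eq (by norm_num : (2:ℝ) ≠ 1) N]
          norm_num
        linarith
      · rw [if_neg h, add_zero]
        exact ih

lemma W_integrableOn {a b : ℝ} {F : ℝ → ℝ} (hab : a < b) (hF : ContinuousOn F (Set.Icc a b))
    (kk p : ℕ) {s L : ℝ} (hs : 0 < s) :
    IntegrableOn (fun u => smoothOmega kk F u a b / u^p) (Set.Ioc s L) := by
  have hmeas : Measurable (fun u => smoothOmega kk F u a b / u ^ p) :=
    ((smoothOmega_mono_s12 hab.le hF kk).measurable).div (measurable_id.pow_const p)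
  refine Integrable.mono' (g := fun _ => (2^kk * supNorm F a b)/s^p)
    (integrableOn_const measure_Ioc_lt_top.ne) hmeas.aestronglyMeasurable ?_
  filter_upwards [ae_restrict_mem measurableSet_Ioc] with u hu
  have hu1 : s < u := hu.1
  have hWnn : 0 ≤ smoothOmega kk F u a b := smoothOmega_nonneg_s12 hab.le hF kk (hs.trans hu1)
  have hup : (0:ℝ) < u^p := pow_pos (hs.trans hu1) p
  rw [Real.norm_eq_abs, abs_div, abs_of_nonneg hWnn, abs_of_nonneg hup.le]
  exact div_le_div₀ (mul_nonneg (by positivity) (supNorm_nonneg hab.le hF))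
    (smoothOmega_le_norm hab.le hF kk u) (by positivity)
    (pow_le_pow_left₀ hs.le hu1.le p)

lemma swap_lemma {g : ℝ → ℝ} {s L : ℝ} (hs : 0 < s) (hg : Measurable g)
    (hgnn : ∀ u ∈ Set.Ioc s L, 0 ≤ g u) (hgi : IntegrableOn g (Set.Ioc s L))
    (hugi : IntegrableOn (fun u => u * g u) (Set.Ioc s L)) (N : ℕ) :
    ∑ n ∈ range N, (2:ℝ)^n * ∫ u in Set.Ioc ((2:ℝ)^n*s) L, g u
      ≤ (2/s) * ∫ u in Set.Ioc s L, u * g u := by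
  have hone : ∀ n : ℕ, (1:ℝ) ≤ (2:ℝ)^n := fun n => one_le_pow₀ (by norm_num)
  have hsub : ∀ n : ℕ, Set.Ioc ((2:ℝ)^n*s) L = Set.Ioi ((2:ℝ)^n*s) ∩ Set.Ioc s L := by
    intro n
    ext u
    simp only [Set.mem_Ioc, Set.mem_Ioi, Set.mem_inter_iff]
    constructor
    · rintro ⟨h1, h2⟩
      have : s ≤ (2:ℝ)^n * s := le_mul_of_one_le_left hs.le (hone n)
      exact ⟨h1, this.trans_lt h1, h2⟩
    · rintro ⟨h1, _, h2⟩
      exact ⟨h1, h2⟩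
  have e1 : ∀ n : ℕ, ∫ u in Set.Ioc ((2:ℝ)^n*s) L, g u
      = ∫ u in Set.Ioc s L, (Set.Ioi ((2:ℝ)^n*s)).indicator g u := by
    intro n
    rw [MeasureTheory.integral_indicator measurableSet_Ioi,
      MeasureTheory.Measure.restrict_restrict measurableSet_Ioi, ← hsub n]
  have hind : ∀ n : ℕ, IntegrableOn (fun u => (2:ℝ)^n * (Set.Ioi ((2:ℝ)^n*s)).indicator g u)
      (Set.Ioc s L) := by
    intro n
    exact (hgi.indicator measurableSet_Ioi).const_mul _
  calc ∑ n ∈ range N, (2:ℝ)^n * ∫ u in Set.Ioc ((2:ℝ)^n*s) L, g u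
      = ∫ u in Set.Ioc s L, ∑ n ∈ range N,
          (2:ℝ)^n * (Set.Ioi ((2:ℝ)^n*s)).indicator g u := by
        rw [MeasureTheory.integral_finset_sum _ (fun n _ => hind n)]
        refine Finset.sum_congr rfl fun n _ => ?_
        rw [e1 n, MeasureTheory.integral_const_mul]
    _ ≤ ∫ u in Set.Ioc s L, (2/s) * (u * g u) := by
        refine setIntegral_mono_on (integrable_finset_sum _ (fun n _ => hind n))
          (hugi.const_mul _) measurableSet_Ioc ?_
        intro u hu
        have hu1 : s < u := hu.1
        have hgu : 0 ≤ g u := hgnn u hu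
        have e2 : ∀ n : ℕ, (2:ℝ)^n * (Set.Ioi ((2:ℝ)^n*s)).indicator g u
            = (if (2:ℝ)^n < u/s then (2:ℝ)^n else 0) * g u := by
          intro n
          rw [Set.indicator_apply]
          by_cases h : (2:ℝ)^n * s < u
          · rw [if_pos (Set.mem_Ioi.mpr h), if_pos ((lt_div_iff₀ hs).mpr h)]
          · rw [if_neg (fun hc => h (Set.mem_Ioi.mp hc)),
              if_neg (fun hc => h ((lt_div_iff₀ hs).mp hc))]
            simp
        simp only [e2]
        rw [← Finset.sum_mul]
        have hds := dyadic_sum (u/s) (by rw [le_div_iff₀ hs]; linarith) N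
        calc (∑ n ∈ range N, if (2:ℝ)^n < u/s then (2:ℝ)^n else 0) * g u
            ≤ (2*(u/s)) * g u := mul_le_mul_of_nonneg_right hds hgu
          _ = (2/s) * (u * g u) := by ring
    _ = (2/s) * ∫ u in Set.Ioc s L, u * g u := by
        rw [MeasureTheory.integral_const_mul]

lemma iterate_lemma {a b : ℝ} {F : ℝ → ℝ} (hab : a < b) (hF : ContinuousOn F (Set.Icc a b))
    (j : ℕ) : ∀ N : ℕ, ∀ s : ℝ, 0 < s → (∀ n < N, 3*(j:ℝ)*((2:ℝ)^n*s) ≤ b - a) →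
    smoothOmega j F s a b
      ≤ ((1:ℝ)/2^j)^N * smoothOmega j F ((2:ℝ)^N*s) a b
        + ∑ n ∈ range N, ((1:ℝ)/2^j)^(n+1) *
            (((j:ℝ) * 2^j) * smoothOmega (j+1) F ((2:ℝ)^n*s) a b) := by
  intro N
  induction N with
  | zero =>
      intro s hs _
      simp
  | succ N ih =>
      intro s hs hcond
      have h0 := hcond 0 (Nat.succ_pos N)
      simp only [pow_zero, one_mul] at h0
      have hstep := step_lemma hab hF j hs h0
      have hIH := ih (2*s) (by positivity) (fun n hn => by
        have := hcond (n+1) (by omega)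
        calc 3*(j:ℝ)*((2:ℝ)^n*(2*s)) = 3*(j:ℝ)*((2:ℝ)^(n+1)*s) := by ring
          _ ≤ b - a := this)
      have hq : (0:ℝ) ≤ (1:ℝ)/2^j := by positivity
      have e1 : (2:ℝ)^N*(2*s) = (2:ℝ)^(N+1)*s := by ring
      rw [e1] at hIH
      calc smoothOmega j F s a b
          ≤ (smoothOmega j F (2*s) a b + ((j:ℝ) * 2^j) * smoothOmega (j+1) F s a b) / 2^j :=
            hstep
        _ = (1/2^j) * smoothOmega j F (2*s) a b
            + (1/2^j) * (((j:ℝ) * 2^j) * smoothOmega (j+1) F s a b) := by ring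
        _ ≤ (1/2^j) * (((1:ℝ)/2^j)^N * smoothOmega j F ((2:ℝ)^(N+1)*s) a b
              + ∑ n ∈ range N, ((1:ℝ)/2^j)^(n+1) *
                  (((j:ℝ) * 2^j) * smoothOmega (j+1) F ((2:ℝ)^n*(2*s)) a b))
            + (1/2^j) * (((j:ℝ) * 2^j) * smoothOmega (j+1) F s a b) := by
            exact add_le_add_left (mul_le_mul_of_nonneg_left hIH hq) _
        _ = ((1:ℝ)/2^j)^(N+1) * smoothOmega j F ((2:ℝ)^(N+1)*s) a b
            + (∑ n ∈ range N, ((1:ℝ)/2^j)^(n+2) *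
                (((j:ℝ) * 2^j) * smoothOmega (j+1) F ((2:ℝ)^(n+1)*s) a b)
              + ((1:ℝ)/2^j)^(0+1) *
                (((j:ℝ) * 2^j) * smoothOmega (j+1) F ((2:ℝ)^0*s) a b)) := by
            have e3 : ∑ n ∈ range N, (1/2^j) * (((1:ℝ)/2^j)^(n+1) *
                  (((j:ℝ)*2^j) * smoothOmega (j+1) F ((2:ℝ)^n*(2*s)) a b))
                = ∑ n ∈ range N, ((1:ℝ)/2^j)^(n+2) *
                  (((j:ℝ)*2^j) * smoothOmega (j+1) F ((2:ℝ)^(n+1)*s) a b) := by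
              refine Finset.sum_congr rfl fun n _ => ?_
              rw [show (2:ℝ)^n*(2*s) = (2:ℝ)^(n+1)*s from by ring]
              ring
            rw [mul_add, Finset.mul_sum, e3]
            simp only [pow_zero, one_mul]
            ring
        _ = ((1:ℝ)/2^j)^(N+1) * smoothOmega j F ((2:ℝ)^(N+1)*s) a b
            + ∑ n ∈ range (N+1), ((1:ℝ)/2^j)^(n+1) *
                (((j:ℝ) * 2^j) * smoothOmega (j+1) F ((2:ℝ)^n*s) a b) := by
            rw [Finset.sum_range_succ' (fun n => ((1:ℝ)/2^j)^(n+1) *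
                (((j:ℝ) * 2^j) * smoothOmega (j+1) F ((2:ℝ)^n*s) a b)) N]

lemma pow_coeff_identity (j n : ℕ) (s : ℝ) :
    ((1:ℝ)/2^j)^(n+1) * ((j:ℝ)*2^j) * (((2:ℝ)^n*s)^(j+1)) = (j:ℝ)*2^n*s^(j+1) := by
  rw [mul_pow ((2:ℝ)^n) s (j+1), ← pow_mul, div_pow, one_pow, ← pow_mul]
  rw [div_mul_eq_mul_div, div_mul_eq_mul_div, div_eq_iff (by positivity : ((2:ℝ)^(j*(n+1))) ≠ 0)]
  rw [show (j:ℝ)*2^n*s^(j+1)*2^(j*(n+1)) = (j:ℝ)*s^(j+1)*(2^n*2^(j*(n+1))) from by ring,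
    show 1*((j:ℝ)*2^j)*(2^(n*(j+1))*s^(j+1)) = (j:ℝ)*s^(j+1)*(2^j*2^(n*(j+1))) from by ring,
    ← pow_add, ← pow_add]
  congr 1
  ring

set_option maxHeartbeats 2000000 in
lemma marchaud_claim (k : ℕ) : ∀ n : ℕ, ∀ j : ℕ, 1 ≤ j → j + n = k →
    ∃ c : ℝ, 0 < c ∧ ∀ a b : ℝ, a < b → ∀ F : ℝ → ℝ, ContinuousOn F (Set.Icc a b) →
      ∀ s : ℝ, 0 < s → s ≤ b - a →
        smoothOmega j F s a b ≤
          c * s ^ j *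
            ((∫ u in Set.Ioc s (b - a), smoothOmega k F u a b / u ^ (j + 1)) +
              supNorm F a b / (b - a) ^ j) := by
  intro n
  induction n with
  | zero =>
      intro j hj hjk
      rw [Nat.add_zero] at hjk
      subst hjk
      refine ⟨2^(j+1) + 4^j, by positivity, ?_⟩
      intro a b hab F hF s hs hsL
      have hL : 0 < b - a := by linarith
      have hM : 0 ≤ supNorm F a b := supNorm_nonneg hab.le hF
      have hI0 : 0 ≤ ∫ u in Set.Ioc s (b-a), smoothOmega j F u a b / u^(j+1) := by
        refine setIntegral_nonneg measurableSet_Ioc fun u hu => ?_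
        exact div_nonneg (smoothOmega_nonneg_s12 hab.le hF j (hs.trans hu.1))
          (pow_nonneg (hs.trans hu.1).le _)
      have hMLk : 0 ≤ supNorm F a b / (b-a)^j := div_nonneg hM (by positivity)
      have hsk : (0:ℝ) < s^j := pow_pos hs j
      rcases le_or_gt (2*s) (b-a) with h2s | h2s
      · have hint : IntegrableOn (fun u => smoothOmega j F u a b / u^(j+1))
            (Set.Ioc s (b-a)) := W_integrableOn hab hF j (j+1) hs
        have hsub : Set.Ioc s (2*s) ⊆ Set.Ioc s (b-a) := Set.Ioc_subset_Ioc_right h2s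
        have h1 : (∫ u in Set.Ioc s (2*s), smoothOmega j F u a b / u^(j+1))
            ≤ ∫ u in Set.Ioc s (b-a), smoothOmega j F u a b / u^(j+1) := by
          refine setIntegral_mono_set hint ?_ (HasSubset.Subset.eventuallyLE hsub)
          filter_upwards [ae_restrict_mem measurableSet_Ioc] with u hu
          exact div_nonneg (smoothOmega_nonneg_s12 hab.le hF j (hs.trans hu.1))
            (pow_nonneg (hs.trans hu.1).le _)
        have h2 : s * (smoothOmega j F s a b / (2*s)^(j+1))
            ≤ ∫ u in Set.Ioc s (2*s), smoothOmega j F u a b / u^(j+1) := by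
          have hmono : ∀ u ∈ Set.Ioc s (2*s),
              smoothOmega j F s a b / (2*s)^(j+1) ≤ smoothOmega j F u a b / u^(j+1) := by
            intro u hu
            refine div_le_div₀ (smoothOmega_nonneg_s12 hab.le hF j (hs.trans hu.1))
              (smoothOmega_mono_s12 hab.le hF j hu.1.le) (pow_pos (hs.trans hu.1) _)
              (pow_le_pow_left₀ (hs.trans hu.1).le hu.2 _)
          have hle := setIntegral_mono_on
            (integrableOn_const measure_Ioc_lt_top.ne)
            (hint.mono_set hsub) measurableSet_Ioc hmono
          calc s * (smoothOmega j F s a b / (2*s)^(j+1))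
              = ∫ _u in Set.Ioc s (2*s), (smoothOmega j F s a b / (2*s)^(j+1)) := by
                rw [setIntegral_const, measureReal_def, Real.volume_Ioc,
                  ENNReal.toReal_ofReal (by linarith : (0:ℝ) ≤ 2*s - s), smul_eq_mul]
                ring
            _ ≤ _ := hle
        have h3 : smoothOmega j F s a b / (2^(j+1) * s^j)
            ≤ ∫ u in Set.Ioc s (b-a), smoothOmega j F u a b / u^(j+1) := by
          have e : s * (smoothOmega j F s a b / (2*s)^(j+1))
              = smoothOmega j F s a b / (2^(j+1) * s^j) := by
            rw [mul_pow]
            rw [pow_succ s j]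
            field_simp
          rw [← e]
          exact h2.trans h1
        rw [div_le_iff₀ (by positivity)] at h3
        have hP : (0:ℝ) ≤ s^j * (∫ u in Set.Ioc s (b-a), smoothOmega j F u a b / u^(j+1)) :=
          mul_nonneg hsk.le hI0
        have hQ : (0:ℝ) ≤ s^j * (supNorm F a b/(b-a)^j) := mul_nonneg hsk.le hMLk
        have h4 : (0:ℝ) < (4:ℝ)^j := by positivity
        have h2p : (0:ℝ) < (2:ℝ)^(j+1) := by positivity
        nlinarith [h3, mul_nonneg h4.le hP, mul_nonneg h4.le hQ, mul_nonneg h2p.le hQ,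
          mul_nonneg h2p.le hP]
      · -- 2*s > b - a
        have hWk := smoothOmega_le_norm hab.le hF j s
        have hsk2 : ((b-a)/2)^j ≤ s^j := pow_le_pow_left₀ (by positivity) (by linarith) j
        have e : ((b-a)/2)^j * (supNorm F a b/(b-a)^j) = supNorm F a b/2^j := by
          rw [div_pow]
          field_simp
        have e2 : (4:ℝ)^j = 2^j * 2^j := by
          rw [show (4:ℝ) = 2*2 from by norm_num, mul_pow]
        have h5 : supNorm F a b/2^j ≤ s^j * (supNorm F a b/(b-a)^j) := by
          rw [← e]
          exact mul_le_mul_of_nonneg_right hsk2 hMLk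
        have h6 : (2:ℝ)^j * supNorm F a b ≤ 4^j * (s^j * (supNorm F a b/(b-a)^j)) := by
          rw [e2]
          calc (2:ℝ)^j * supNorm F a b = 2^j * 2^j * (supNorm F a b/2^j) := by
                field_simp
            _ ≤ 2^j * 2^j * (s^j * (supNorm F a b/(b-a)^j)) := by
                refine mul_le_mul_of_nonneg_left h5 (by positivity)
        have hP : (0:ℝ) ≤ s^j * (∫ u in Set.Ioc s (b-a), smoothOmega j F u a b / u^(j+1)) :=
          mul_nonneg hsk.le hI0
        have h2p : (0:ℝ) < (2:ℝ)^(j+1) := by positivity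
        have h4 : (0:ℝ) < (4:ℝ)^j := by positivity
        nlinarith [hWk, h6, mul_nonneg h2p.le hP, mul_nonneg h2p.le (mul_nonneg hsk.le hMLk),
          mul_nonneg h4.le hP]
  | succ n ih =>
      intro j hj hjk
      obtain ⟨c', hc', H'⟩ := ih (j+1) (by omega) (by omega)
      have hj0 : (0:ℝ) < (j:ℝ) := by exact_mod_cast hj
      have hc6 : (0:ℝ) < (6*(j:ℝ))^j := pow_pos (by linarith) j
      refine ⟨(6*(j:ℝ))^j + 2*(j:ℝ)*c' + c', by positivity, ?_⟩
      intro a b hab F hF s hs hsL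
      have hL : 0 < b - a := by linarith
      have hM : 0 ≤ supNorm F a b := supNorm_nonneg hab.le hF
      set M := supNorm F a b with hMdef
      set I := ∫ u in Set.Ioc s (b-a), smoothOmega k F u a b / u^(j+1) with hIdef
      have hI0 : 0 ≤ I := by
        refine setIntegral_nonneg measurableSet_Ioc fun u hu => ?_
        exact div_nonneg (smoothOmega_nonneg_s12 hab.le hF k (hs.trans hu.1))
          (pow_nonneg (hs.trans hu.1).le _)
      have hMLk : 0 ≤ M / (b-a)^j := div_nonneg hM (by positivity)
      have hsk : (0:ℝ) < s^j := pow_pos hs j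
      have hP : (0:ℝ) ≤ s^j * I := mul_nonneg hsk.le hI0
      have hQ : (0:ℝ) ≤ s^j * (M/(b-a)^j) := mul_nonneg hsk.le hMLk
      by_cases hcase : 3*(j:ℝ)*s ≤ b - a
      · -- main case : dyadic iteration
        have hNex : ∃ N : ℕ, b - a < 3*(j:ℝ)*((2:ℝ)^N*s) := by
          obtain ⟨N, hN⟩ := pow_unbounded_of_one_lt ((b-a)/(3*(j:ℝ)*s)) (by norm_num : (1:ℝ) < 2)
          refine ⟨N, ?_⟩
          rw [div_lt_iff₀ (by positivity)] at hN
          nlinarith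
        set N := Nat.find hNex with hNdef
        have hN1 : b - a < 3*(j:ℝ)*((2:ℝ)^N*s) := Nat.find_spec hNex
        have hN2 : ∀ n' < N, 3*(j:ℝ)*((2:ℝ)^n'*s) ≤ b - a := fun n' hn' =>
          not_lt.mp (Nat.find_min hNex hn')
        have hNpos : 0 < N := by
          rcases Nat.eq_zero_or_pos N with h0 | h0
          · exfalso
            rw [h0] at hN1
            simp only [pow_zero, one_mul] at hN1
            linarith
          · exact h0
        have hNsplit : (2:ℝ)^N = 2*(2:ℝ)^(N-1) := by
          rw [← pow_succ']
          congr 1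
          omega
        have h2NL : 3*(j:ℝ)*((2:ℝ)^N*s) ≤ 2*(b-a) := by
          have := hN2 (N-1) (by omega)
          rw [hNsplit]
          linarith
        have hiter := iterate_lemma hab hF j N s hs hN2
        -- term 1
        have hT1 : ((1:ℝ)/2^j)^N * smoothOmega j F ((2:ℝ)^N*s) a b
            ≤ (6*(j:ℝ))^j * (s^j * (M/(b-a)^j)) := by
          have hq : ((1:ℝ)/2^j)^N = ((1:ℝ)/2^N)^j := by
            rw [div_pow, div_pow, one_pow, one_pow, ← pow_mul, ← pow_mul, Nat.mul_comm]
          have hqle : ((1:ℝ)/2^N)^j ≤ (3*(j:ℝ)*s/(b-a))^j := by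
            refine pow_le_pow_left₀ (by positivity) ?_ j
            rw [div_le_div_iff₀ (by positivity) hL]
            nlinarith
          have e_t1 : (3*(j:ℝ)*s/(b-a))^j * (2^j*M) = (6*(j:ℝ))^j * (s^j*(M/(b-a)^j)) := by
            rw [show (6*(j:ℝ)) = 2*(3*j) from by ring, mul_pow,
              show 3*(j:ℝ)*s/(b-a) = (3*(j:ℝ))*(s/(b-a)) from by ring, mul_pow, div_pow]
            field_simp
          calc ((1:ℝ)/2^j)^N * smoothOmega j F ((2:ℝ)^N*s) a b
              ≤ (3*(j:ℝ)*s/(b-a))^j * (2^j*M) := by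
                refine mul_le_mul (hq ▸ hqle) (smoothOmega_le_norm hab.le hF j _)
                  (smoothOmega_nonneg_s12 hab.le hF j (by positivity)) (by positivity)
            _ = _ := e_t1
        -- term 2 : sum
        set g : ℝ → ℝ := fun u => smoothOmega k F u a b / u^(j+2) with hgdef
        have hterm : ∀ n' ∈ range N,
            ((1:ℝ)/2^j)^(n'+1) * (((j:ℝ) * 2^j) * smoothOmega (j+1) F ((2:ℝ)^n'*s) a b)
            ≤ (j:ℝ)*c' * ((2:ℝ)^n' * (s^(j+1) *
                ((∫ u in Set.Ioc ((2:ℝ)^n'*s) (b-a), g u) + M/(b-a)^(j+1)))) := by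
          intro n' hn'
          have hn'' : n' < N := Finset.mem_range.mp hn'
          have h2ns : 0 < (2:ℝ)^n' * s := by positivity
          have hj1 : (1:ℝ) ≤ (j:ℝ) := by exact_mod_cast hj
          have h2nsL : (2:ℝ)^n'*s ≤ b - a := by
            have := hN2 n' hn''
            nlinarith
          have hH := H' a b hab F hF ((2:ℝ)^n'*s) h2ns h2nsL
          have hcoeff : (0:ℝ) ≤ ((1:ℝ)/2^j)^(n'+1) * ((j:ℝ) * 2^j) := by positivity
          calc ((1:ℝ)/2^j)^(n'+1) * (((j:ℝ) * 2^j) * smoothOmega (j+1) F ((2:ℝ)^n'*s) a b)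
              = (((1:ℝ)/2^j)^(n'+1) * ((j:ℝ) * 2^j)) * smoothOmega (j+1) F ((2:ℝ)^n'*s) a b := by
                ring
            _ ≤ (((1:ℝ)/2^j)^(n'+1) * ((j:ℝ) * 2^j)) * (c' * ((2:ℝ)^n'*s)^(j+1) *
                  ((∫ u in Set.Ioc ((2:ℝ)^n'*s) (b-a), g u) + M/(b-a)^(j+1))) :=
                mul_le_mul_of_nonneg_left hH hcoeff
            _ = (j:ℝ)*c' * ((2:ℝ)^n' * (s^(j+1) *
                  ((∫ u in Set.Ioc ((2:ℝ)^n'*s) (b-a), g u) + M/(b-a)^(j+1)))) := by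
                linear_combination (c' * ((∫ u in Set.Ioc ((2:ℝ)^n'*s) (b-a), g u)
                  + M/(b-a)^(j+1))) * pow_coeff_identity j n' s
        -- assemble the sum bound
        have hsum1 := Finset.sum_le_sum hterm
        have hsum2 : ∑ n' ∈ range N, (j:ℝ)*c' * ((2:ℝ)^n' * (s^(j+1) *
              ((∫ u in Set.Ioc ((2:ℝ)^n'*s) (b-a), g u) + M/(b-a)^(j+1))))
            = (j:ℝ)*c'*s^(j+1) *
                (∑ n' ∈ range N, (2:ℝ)^n' * ∫ u in Set.Ioc ((2:ℝ)^n'*s) (b-a), g u)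
              + (j:ℝ)*c'*s^(j+1)*(M/(b-a)^(j+1)) * (∑ n' ∈ range N, (2:ℝ)^n') := by
          rw [Finset.mul_sum, Finset.mul_sum, ← Finset.sum_add_distrib]
          refine Finset.sum_congr rfl fun n' _ => by ring
        have hgmeas : Measurable g :=
          ((smoothOmega_mono_s12 hab.le hF k).measurable).div (measurable_id.pow_const _)
        have hgnn : ∀ u ∈ Set.Ioc s (b-a), 0 ≤ g u := fun u hu =>
          div_nonneg (smoothOmega_nonneg_s12 hab.le hF k (hs.trans hu.1))
            (pow_nonneg (hs.trans hu.1).le _)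
        have hgi : IntegrableOn g (Set.Ioc s (b-a)) := W_integrableOn hab hF k (j+2) hs
        have hug_eq : Set.EqOn (fun u => smoothOmega k F u a b / u^(j+1))
            (fun u => u * g u) (Set.Ioc s (b-a)) := by
          intro u hu
          have hu0 : u ≠ 0 := ne_of_gt (hs.trans hu.1)
          simp only [hgdef]
          rw [pow_succ u (j+1)]
          field_simp
        have hugi : IntegrableOn (fun u => u * g u) (Set.Ioc s (b-a)) :=
          (W_integrableOn hab hF k (j+1) hs).congr_fun hug_eq measurableSet_Ioc
        have hswap := swap_lemma hs hgmeas hgnn hgi hugi N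
        have hIeq : (∫ u in Set.Ioc s (b-a), u * g u) = I := by
          rw [hIdef]
          exact (setIntegral_congr_fun measurableSet_Ioc hug_eq).symm
        rw [hIeq] at hswap
        have hgeo : ∑ n' ∈ range N, (2:ℝ)^n' ≤ (2:ℝ)^N := by
          have := geom_sum_eq (by norm_num : (2:ℝ) ≠ 1) N
          rw [this]
          have : (0:ℝ) < 2^N := by positivity
          rw [show (2:ℝ) - 1 = 1 from by norm_num, div_one]
          linarith
        have hcnn : (0:ℝ) ≤ (j:ℝ)*c'*s^(j+1) := by positivity
        have hcnn2 : (0:ℝ) ≤ (j:ℝ)*c'*s^(j+1)*(M/(b-a)^(j+1)) := by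
          have : (0:ℝ) ≤ M/(b-a)^(j+1) := div_nonneg hM (by positivity)
          positivity
        have e5 : (j:ℝ)*c'*s^(j+1)*((2/s)*I) = 2*(j:ℝ)*c'*(s^j*I) := by
          rw [pow_succ s j]
          field_simp
        have hsN : s*(2:ℝ)^N ≤ 2*(b-a)/(3*(j:ℝ)) := by
          rw [le_div_iff₀ (by positivity)]
          nlinarith [h2NL]
        have e7 : (j:ℝ)*c'*s^(j+1)*(M/(b-a)^(j+1))*(2:ℝ)^N
            = (j:ℝ)*c'*(s^j*(M/(b-a)^j))*((s*(2:ℝ)^N)/(b-a)) := by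
          rw [pow_succ s j, pow_succ (b-a) j]
          field_simp
        have h2'' : (j:ℝ)*c'*s^(j+1)*(M/(b-a)^(j+1))*(2:ℝ)^N ≤ c'*(s^j*(M/(b-a)^j)) := by
          rw [e7]
          have hdiv : (s*(2:ℝ)^N)/(b-a) ≤ 2/(3*(j:ℝ)) := by
            rw [div_le_div_iff₀ hL (by positivity)]
            nlinarith [hsN, hL]
          calc (j:ℝ)*c'*(s^j*(M/(b-a)^j))*((s*(2:ℝ)^N)/(b-a))
              ≤ (j:ℝ)*c'*(s^j*(M/(b-a)^j))*(2/(3*(j:ℝ))) := by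
                refine mul_le_mul_of_nonneg_left hdiv ?_
                positivity
            _ = (2/3)*c'*(s^j*(M/(b-a)^j)) := by
                field_simp
            _ ≤ c'*(s^j*(M/(b-a)^j)) := by nlinarith [hQ, hc']
        calc smoothOmega j F s a b
            ≤ ((1:ℝ)/2^j)^N * smoothOmega j F ((2:ℝ)^N*s) a b
              + ∑ n' ∈ range N, ((1:ℝ)/2^j)^(n'+1) *
                  (((j:ℝ) * 2^j) * smoothOmega (j+1) F ((2:ℝ)^n'*s) a b) := hiter
          _ ≤ (6*(j:ℝ))^j * (s^j * (M/(b-a)^j))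
              + ((j:ℝ)*c'*s^(j+1) *
                  (∑ n' ∈ range N, (2:ℝ)^n' * ∫ u in Set.Ioc ((2:ℝ)^n'*s) (b-a), g u)
                + (j:ℝ)*c'*s^(j+1)*(M/(b-a)^(j+1)) * (∑ n' ∈ range N, (2:ℝ)^n')) := by
              refine add_le_add hT1 ?_
              rw [← hsum2]
              exact hsum1
          _ ≤ (6*(j:ℝ))^j * (s^j * (M/(b-a)^j))
              + ((j:ℝ)*c'*s^(j+1) * ((2/s)*I)
                + (j:ℝ)*c'*s^(j+1)*(M/(b-a)^(j+1)) * (2:ℝ)^N) := by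
              refine add_le_add_right (add_le_add ?_ ?_) _
              · exact mul_le_mul_of_nonneg_left hswap hcnn
              · exact mul_le_mul_of_nonneg_left hgeo hcnn2
          _ ≤ (6*(j:ℝ))^j * (s^j * (M/(b-a)^j)) + (2*(j:ℝ)*c'*(s^j*I)
              + c'*(s^j*(M/(b-a)^j))) := by
              refine add_le_add_right (add_le_add (le_of_eq e5) h2'') _
          _ ≤ ((6*(j:ℝ))^j + 2*(j:ℝ)*c' + c') * s^j * (I + M/(b-a)^j) := by
              nlinarith [mul_nonneg hc6.le hP, mul_nonneg hc6.le hQ, hP, hQ,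
                mul_nonneg (mul_nonneg hj0.le hc'.le) hP,
                mul_nonneg (mul_nonneg hj0.le hc'.le) hQ, hc'.le, mul_nonneg hc'.le hP]
      · -- boundary case : s is large
        have hWj := smoothOmega_le_norm hab.le hF j s
        have hs3 : (b-a)/(3*(j:ℝ)) < s := by
          rw [div_lt_iff₀ (by positivity)]
          nlinarith [not_le.mp hcase]
        have hsk2 : ((b-a)/(3*(j:ℝ)))^j ≤ s^j :=
          pow_le_pow_left₀ (by positivity) hs3.le j
        have e : (6*(j:ℝ))^j * (((b-a)/(3*(j:ℝ)))^j * (M/(b-a)^j)) = 2^j * M := by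
          rw [show (6*(j:ℝ)) = 2*(3*(j:ℝ)) from by ring, mul_pow, div_pow]
          field_simp
        have h6 : 2^j * M ≤ (6*(j:ℝ))^j * (s^j * (M/(b-a)^j)) := by
          rw [← e]
          refine mul_le_mul_of_nonneg_left ?_ (by positivity)
          exact mul_le_mul_of_nonneg_right hsk2 hMLk
        nlinarith [hWj, h6, hP, hQ, mul_pos hj0 hc']

end Marchaud

/-- the Marchaud inequality. -/
theorem stmt12 (k l : ℕ) (hl : 1 ≤ l) (hlk : l < k) :
    ∃ c : ℝ, 0 < c ∧ ∀ a b : ℝ, a < b → ∀ F : ℝ → ℝ, ContinuousOn F (Set.Icc a b) →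
      ∀ t : ℝ, 0 < t → t ≤ b - a →
        smoothOmega l F t a b ≤
          c * t ^ l *
            ((∫ u in Set.Ioc t (b - a), smoothOmega k F u a b / u ^ (l + 1)) +
              supNorm F a b / (b - a) ^ l) := by
  obtain ⟨c, hc, H⟩ := marchaud_claim k (k - l) l hl (by omega)
  exact ⟨c, hc, fun a b hab F hF t ht htL => H a b hab F hF t ht htL⟩
end

section
/- (Whitney inequality) Let k ∈ ℕ. There exists a constant c = c(k) such that for every F ∈ C[a,b]: if E_{k-1}(F) denotes the error of best uniform approximation of F on [a,b] by polynomials of degree at most k-1, then E_{k-1}(F) ≤ c · ω_k(F, b-a; [a,b]). -/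
open scoped BigOperators

section WhitneyProof

open MeasureTheory intervalIntegral Set Function Polynomial
open scoped fwdDiff

namespace Whitney13


noncomputable def Stek (h : ℝ) (g : ℝ → ℝ) : ℝ → ℝ :=
  fun x => if h = 0 then g x else (∫ t in x..(x+h), g t) / h

noncomputable def StekIt (h : ℝ) : ℕ → (ℝ → ℝ) → ℝ → ℝ
  | 0, g => g
  | (m+1), g => Stek h (StekIt h m g)

lemma stek_zero (g : ℝ → ℝ) : Stek 0 g = g := by
  funext x; simp [Stek]

lemma stek_apply {h : ℝ} (hh : h ≠ 0) (g : ℝ → ℝ) (x : ℝ) :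
    Stek h g x = (∫ t in x..(x+h), g t) / h := by simp [Stek, hh]

lemma hasDerivAt_primitive {g : ℝ → ℝ} (hg : Continuous g) (y : ℝ) :
    HasDerivAt (fun u => ∫ t in (0:ℝ)..u, g t) (g y) y :=
  integral_hasDerivAt_right (hg.intervalIntegrable _ _)
    (hg.stronglyMeasurableAtFilter _ _) hg.continuousAt

lemma stek_eq_sub {h : ℝ} (hh : h ≠ 0) {g : ℝ → ℝ} (hg : Continuous g) :
    Stek h g = fun x => ((∫ t in (0:ℝ)..(x+h), g t) - ∫ t in (0:ℝ)..x, g t) / h := by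
  funext x
  rw [stek_apply hh]
  congr 1
  rw [integral_interval_sub_left (hg.intervalIntegrable _ _) (hg.intervalIntegrable _ _)]

lemma stek_hasDerivAt {h : ℝ} (hh : h ≠ 0) {g : ℝ → ℝ} (hg : Continuous g) (x : ℝ) :
    HasDerivAt (Stek h g) ((g (x + h) - g x) / h) x := by
  rw [stek_eq_sub hh hg]
  have h1 : HasDerivAt (fun u : ℝ => u + h) 1 x := (hasDerivAt_id x).add_const h
  have h2 := (hasDerivAt_primitive hg (x + h)).comp x h1
  simpa using (h2.sub (hasDerivAt_primitive hg x)).div_const h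

lemma stek_continuous {h : ℝ} {g : ℝ → ℝ} (hg : Continuous g) : Continuous (Stek h g) := by
  rcases eq_or_ne h 0 with rfl | hh
  · simpa [stek_zero]
  · exact continuous_iff_continuousAt.2 fun x => (stek_hasDerivAt hh hg x).continuousAt

lemma fwdDiff_continuous {h : ℝ} {g : ℝ → ℝ} (hg : Continuous g) : Continuous (Δ_[h] g) := by
  have : Δ_[h] g = fun x => g (x + h) - g x := rfl
  rw [this]
  exact (hg.comp (continuous_id.add continuous_const)).sub hg

lemma stek_fwdDiff {h : ℝ} (hh : h ≠ 0) {g : ℝ → ℝ} (hg : Continuous g) :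
    Stek h (Δ_[h] g) = Δ_[h] (Stek h g) := by
  funext x
  have hΔ : ∀ u v : ℝ, (∫ t in u..v, Δ_[h] g t)
      = (∫ t in (u+h)..(v+h), g t) - ∫ t in u..v, g t := by
    intro u v
    have h1 : (∫ t in u..v, (g (t + h) - g t))
        = (∫ t in u..v, g (t + h)) - ∫ t in u..v, g t :=
      integral_sub ((hg.comp (continuous_id.add continuous_const)).intervalIntegrable _ _)
        (hg.intervalIntegrable _ _)
    have h2 : (∫ t in u..v, g (t + h)) = ∫ t in (u+h)..(v+h), g t :=
      integral_comp_add_right g h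
    rw [show (∫ t in u..v, Δ_[h] g t) = ∫ t in u..v, (g (t + h) - g t) from rfl, h1, h2]
  show Stek h (Δ_[h] g) x = Stek h g (x + h) - Stek h g x
  rw [stek_apply hh, stek_apply hh, stek_apply hh, hΔ]
  rw [show x + h + h = x + h + h from rfl]
  ring

lemma stekIt_continuous {h : ℝ} {g : ℝ → ℝ} (hg : Continuous g) :
    ∀ m, Continuous (StekIt h m g)
  | 0 => hg
  | (m+1) => stek_continuous (stekIt_continuous hg m)

lemma stekIt_fwdDiff {h : ℝ} (hh : h ≠ 0) {g : ℝ → ℝ} (hg : Continuous g) :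
    ∀ m, Δ_[h] (StekIt h m g) = StekIt h m (Δ_[h] g)
  | 0 => rfl
  | (m+1) => by
    show Δ_[h] (Stek h (StekIt h m g)) = Stek h (StekIt h m (Δ_[h] g))
    rw [← stek_fwdDiff hh (stekIt_continuous hg m), stekIt_fwdDiff hh hg m]

lemma itd_const_mul {n : ℕ} (c : ℝ) {f : ℝ → ℝ} (hf : ContDiff ℝ (n:ℕ) f) :
    iteratedDeriv n (fun z => c * f z) = fun z => c * iteratedDeriv n f z := by
  funext x
  simp only [← iteratedDerivWithin_univ]
  exact iteratedDerivWithin_const_mul (mem_univ x) uniqueDiffOn_univ c hf.contDiffAt.contDiffWithinAt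

lemma stekIt_contDiff_deriv {h : ℝ} (hh : h ≠ 0) :
    ∀ (m : ℕ) {g : ℝ → ℝ}, Continuous g → ContDiff ℝ (m:ℕ) (StekIt h m g) ∧
      iteratedDeriv m (StekIt h m g) = fun x => (fwdDiff h)^[m] g x / h ^ m := by
  intro m
  induction m with
  | zero =>
    intro g hg
    exact ⟨contDiff_zero.mpr hg, by funext x; simp [StekIt]⟩
  | succ m IH =>
    intro g hg
    have hIH := IH (g := Δ_[h] g) (fwdDiff_continuous hg)
    have hdiff : Differentiable ℝ (StekIt h (m+1) g) := fun x =>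
      (stek_hasDerivAt hh (stekIt_continuous hg m) x).differentiableAt
    have hder : deriv (StekIt h (m+1) g) = fun x => StekIt h m (Δ_[h] g) x / h := by
      funext x
      have h1 := (stek_hasDerivAt (h := h) hh (stekIt_continuous (h := h) hg m) x).deriv
      have h2 := congrFun (stekIt_fwdDiff hh hg m) x
      show deriv (Stek h (StekIt h m g)) x = _
      rw [h1, ← h2]
      rfl
    have hcd : ContDiff ℝ ((m:ℕ) + 1) (StekIt h (m+1) g) := by
      rw [contDiff_succ_iff_deriv]
      refine ⟨hdiff, by simp, ?_⟩
      rw [hder]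
      have : (fun x => StekIt h m (Δ_[h] g) x / h)
          = fun x => h⁻¹ * StekIt h m (Δ_[h] g) x := by funext x; rw [div_eq_inv_mul]
      rw [this]
      exact contDiff_const.mul hIH.1
    constructor
    · exact_mod_cast hcd
    · rw [iteratedDeriv_succ', hder]
      have : (fun x => StekIt h m (Δ_[h] g) x / h)
          = fun x => h⁻¹ * StekIt h m (Δ_[h] g) x := by funext x; rw [div_eq_inv_mul]
      rw [this, itd_const_mul h⁻¹ hIH.1, hIH.2]
      funext x
      rw [Function.iterate_succ_apply, pow_succ, div_mul_eq_div_div, inv_mul_eq_div]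


lemma stekIt_zero (g : ℝ → ℝ) : ∀ m, StekIt 0 m g = g
  | 0 => rfl
  | (m+1) => by show Stek 0 (StekIt 0 m g) = g; rw [stek_zero, stekIt_zero g m]

lemma stek_avg {η : ℝ} (hη : 0 < η) (i : ℕ) {g : ℝ → ℝ} (hg : Continuous g) (y : ℝ) :
    Stek ((i:ℝ) * η) g y = (∫ t in (0:ℝ)..η, g (y + (i:ℝ) * t)) / η := by
  rcases Nat.eq_zero_or_pos i with rfl | hi
  · simp only [Nat.cast_zero, zero_mul, stek_zero, add_zero]
    rw [intervalIntegral.integral_const]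
    simp only [sub_zero, smul_eq_mul]
    rw [mul_comm, mul_div_assoc, div_self hη.ne', mul_one]
  · have hipos : (0:ℝ) < (i:ℝ) := by exact_mod_cast hi
    have hiη : (i:ℝ) * η ≠ 0 := by positivity
    rw [stek_apply hiη]
    have h1 : (∫ t in (0:ℝ)..η, g (y + (i:ℝ) * t))
        = (i:ℝ)⁻¹ • ∫ s in ((i:ℝ) * 0)..((i:ℝ) * η), g (y + s) :=
      integral_comp_mul_left (fun s => g (y + s)) hipos.ne'
    have h2 : (∫ s in (0:ℝ)..((i:ℝ) * η), g (y + s)) = ∫ u in (y + 0)..(y + (i:ℝ)*η), g u :=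
      integral_comp_add_left g y
    rw [h1, mul_zero, h2, add_zero]
    simp only [smul_eq_mul]
    field_simp

noncomputable def Gfun (k : ℕ) (f : ℝ → ℝ) (η : ℝ) (m : ℕ) (v x : ℝ) : ℝ :=
  ∑ i ∈ Finset.range (k+1), (-1:ℝ)^i * (k.choose i) * StekIt ((i:ℝ)*η) m f (x + (i:ℝ)*v)

lemma Gfun_succ {k : ℕ} {f : ℝ → ℝ} {η : ℝ} (hη : 0 < η) (hf : Continuous f) (m : ℕ) (v x : ℝ) :
    Gfun k f η (m+1) v x = (∫ t in (0:ℝ)..η, Gfun k f η m (v+t) x) / η := by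
  unfold Gfun
  have hterm : ∀ i ∈ Finset.range (k+1),
      (-1:ℝ)^i * (k.choose i) * StekIt ((i:ℝ)*η) (m+1) f (x + (i:ℝ)*v)
      = (∫ t in (0:ℝ)..η, (-1:ℝ)^i * (k.choose i) * StekIt ((i:ℝ)*η) m f (x + (i:ℝ)*(v+t))) / η := by
    intro i _
    have h1 : StekIt ((i:ℝ)*η) (m+1) f (x + (i:ℝ)*v)
        = (∫ t in (0:ℝ)..η, StekIt ((i:ℝ)*η) m f ((x + (i:ℝ)*v) + (i:ℝ)*t)) / η := by
      show Stek ((i:ℝ)*η) (StekIt ((i:ℝ)*η) m f) (x + (i:ℝ)*v) = _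
      exact stek_avg hη i (stekIt_continuous hf m) _
    rw [h1, ← mul_div_assoc]
    congr 1
    rw [← intervalIntegral.integral_const_mul]
    apply intervalIntegral.integral_congr
    intro t _
    show _ = (-1:ℝ)^i * (k.choose i) * StekIt ((i:ℝ)*η) m f (x + (i:ℝ)*(v+t))
    have harg : x + (i:ℝ)*(v+t) = x + (i:ℝ)*v + (i:ℝ)*t := by ring
    rw [harg]
  rw [Finset.sum_congr rfl hterm, ← Finset.sum_div]
  congr 1
  rw [← intervalIntegral.integral_finset_sum]
  intro i _
  exact (continuous_const.mul ((stekIt_continuous hf m).comp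
    (continuous_const.add (continuous_const.mul
      (continuous_const.add continuous_id))))).intervalIntegrable _ _



lemma neg1_split {k i : ℕ} (hik : i ≤ k) : (-1:ℝ)^i = (-1)^k * (-1)^(k-i) := by
  rw [← pow_add]
  rcases Nat.even_or_odd i with hi | hi
  · have h2 : Even (k + (k - i)) := by
      rw [Nat.even_iff] at hi ⊢; omega
    rw [hi.neg_one_pow, h2.neg_one_pow]
  · have h2 : Odd (k + (k - i)) := by
      rw [Nat.odd_iff] at hi ⊢; omega
    rw [hi.neg_one_pow, h2.neg_one_pow]

/-- Points of the symmetric difference window are in `[a,b]`. -/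
lemma window_mem {k i : ℕ} (hik : i ≤ k) {u x a b : ℝ} (hu : 0 < u)
    (h1 : a ≤ x - ((k:ℝ)/2) * u) (h2 : x + ((k:ℝ)/2) * u ≤ b) :
    x + ((k:ℝ)/2 - i) * u ∈ Set.Icc a b := by
  have hik' : (i:ℝ) ≤ k := by exact_mod_cast hik
  have hi0 : (0:ℝ) ≤ i := Nat.cast_nonneg i
  constructor
  · nlinarith
  · nlinarith

/-- The symmetric difference only depends on values of `g` on `[a,b]`. -/
lemma kSymmDiff_congr {k : ℕ} {g g' : ℝ → ℝ} {u x a b : ℝ} (hu : 0 < u)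
    (h : ∀ y ∈ Set.Icc a b, g y = g' y) :
    kSymmDiff k g u x a b = kSymmDiff k g' u x a b := by
  unfold kSymmDiff
  split_ifs with hc
  · refine Finset.sum_congr rfl fun i hi => ?_
    rw [h _ (window_mem (Nat.lt_succ_iff.mp (Finset.mem_range.mp hi)) hu hc.1 hc.2)]
  · rfl

lemma smoothOmega_congr {k : ℕ} {g g' : ℝ → ℝ} {t a b : ℝ}
    (h : ∀ y ∈ Set.Icc a b, g y = g' y) :
    smoothOmega k g t a b = smoothOmega k g' t a b := by
  unfold smoothOmega
  congr 1
  ext v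
  constructor
  · rintro ⟨u, x, hu, hut, rfl⟩
    exact ⟨u, x, hu, hut, by rw [kSymmDiff_congr hu h]⟩
  · rintro ⟨u, x, hu, hut, rfl⟩
    exact ⟨u, x, hu, hut, by rw [kSymmDiff_congr hu fun y hy => (h y hy).symm]⟩

lemma kSymmDiff_reflect {k : ℕ} {f : ℝ → ℝ} {u x a b : ℝ} :
    kSymmDiff k (fun y => f (a + b - y)) u x a b
      = (-1:ℝ)^k * kSymmDiff k f u (a + b - x) a b := by
  unfold kSymmDiff
  have hcond : (a ≤ x - ((k:ℝ)/2) * u ∧ x + ((k:ℝ)/2) * u ≤ b)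
      ↔ (a ≤ (a + b - x) - ((k:ℝ)/2) * u ∧ (a + b - x) + ((k:ℝ)/2) * u ≤ b) := by
    constructor <;> rintro ⟨h1, h2⟩ <;> constructor <;> linarith
  by_cases hc : a ≤ x - ((k:ℝ)/2) * u ∧ x + ((k:ℝ)/2) * u ≤ b
  · rw [if_pos hc, if_pos (hcond.mp hc), Finset.mul_sum]
    rw [← Finset.sum_range_reflect]
    refine Finset.sum_congr rfl fun j hj => ?_
    have hjk : j ≤ k := Nat.lt_succ_iff.mp (Finset.mem_range.mp hj)
    have h1 : k + 1 - 1 - j = k - j := by omega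
    rw [h1, Nat.choose_symm hjk, Nat.cast_sub hjk]
    rw [neg1_split (Nat.sub_le k j)]
    have h2 : k - (k - j) = j := by omega
    rw [h2]
    have harg : a + b - (x + ((k:ℝ)/2 - ((k:ℝ) - j)) * u)
        = (a + b - x) + ((k:ℝ)/2 - j) * u := by ring
    beta_reduce
    rw [harg]
    ring
  · rw [if_neg hc, if_neg (fun hcc => hc (hcond.mpr hcc)), mul_zero]

lemma smoothOmega_reflect (k : ℕ) (f : ℝ → ℝ) (t a b : ℝ) :
    smoothOmega k (fun y => f (a + b - y)) t a b = smoothOmega k f t a b := by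
  unfold smoothOmega
  congr 1
  ext v
  have habs : ∀ (g : ℝ → ℝ) (u x : ℝ),
      |kSymmDiff k (fun y => g (a + b - y)) u x a b| = |kSymmDiff k g u (a + b - x) a b| := by
    intro g u x
    rw [kSymmDiff_reflect, abs_mul, abs_pow, abs_neg, abs_one, one_pow, one_mul]
  constructor
  · rintro ⟨u, x, hu, hut, rfl⟩
    exact ⟨u, a + b - x, hu, hut, (habs f u x).symm ▸ rfl⟩
  · rintro ⟨u, x, hu, hut, rfl⟩
    refine ⟨u, a + b - x, hu, hut, ?_⟩
    rw [habs f u (a + b - x), sub_sub_cancel]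



lemma omegaSet_bddAbove {k : ℕ} {f : ℝ → ℝ} {a b : ℝ} (hab : a ≤ b) (hf : Continuous f) (t : ℝ) :
    BddAbove {v : ℝ | ∃ u x : ℝ, 0 < u ∧ u ≤ t ∧ v = |kSymmDiff k f u x a b|} := by
  obtain ⟨M, hM⟩ : ∃ M, ∀ x ∈ Set.Icc a b, |f x| ≤ M := by
    obtain ⟨M, hM⟩ := (isCompact_Icc (a := a) (b := b)).exists_bound_of_continuousOn
      hf.continuousOn
    exact ⟨M, fun x hx => by simpa using hM x hx⟩
  have hM0 : 0 ≤ M := le_trans (abs_nonneg _) (hM a ⟨le_refl a, hab⟩)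
  refine ⟨2^k * M, ?_⟩
  rintro v ⟨u, x, hu, hut, rfl⟩
  unfold kSymmDiff
  split_ifs with hc
  · calc |∑ i ∈ Finset.range (k + 1), (-1:ℝ)^i * (k.choose i) * f (x + ((k:ℝ)/2 - i) * u)|
        ≤ ∑ i ∈ Finset.range (k + 1), |(-1:ℝ)^i * (k.choose i) * f (x + ((k:ℝ)/2 - i) * u)| :=
          Finset.abs_sum_le_sum_abs _ _
      _ ≤ ∑ i ∈ Finset.range (k + 1), (k.choose i : ℝ) * M := by
          refine Finset.sum_le_sum fun i hi => ?_
          rw [abs_mul, abs_mul, abs_pow, abs_neg, abs_one, one_pow, one_mul,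
            Nat.abs_cast]
          exact mul_le_mul_of_nonneg_left
            (hM _ (window_mem (Nat.lt_succ_iff.mp (Finset.mem_range.mp hi)) hu hc.1 hc.2))
            (Nat.cast_nonneg _)
      _ = 2^k * M := by
          rw [← Finset.sum_mul]
          congr 1
          rw [← Nat.cast_sum, Nat.sum_range_choose]
          push_cast
          ring
  · simpa using by positivity

lemma omega_nonneg (k : ℕ) (f : ℝ → ℝ) (t a b : ℝ) : 0 ≤ smoothOmega k f t a b :=
  Real.sSup_nonneg (by rintro v ⟨u, x, hu, hut, rfl⟩; positivity)

/-- Key: equally spaced finite differences are bounded by the modulus. -/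
lemma fwdDiff_le_omega {k : ℕ} {f : ℝ → ℝ} {a b : ℝ} (hab : a ≤ b) (hf : Continuous f)
    {u y : ℝ} (hu : 0 < u) (hub : u ≤ b - a) (hay : a ≤ y) (hyb : y + k * u ≤ b) :
    |(fwdDiff u)^[k] f y| ≤ smoothOmega k f (b - a) a b := by
  apply le_csSup (omegaSet_bddAbove hab hf _)
  refine ⟨u, y + ((k:ℝ)/2) * u, hu, hub, ?_⟩
  congr 1
  rw [fwdDiff_iter_eq_sum_shift]
  unfold kSymmDiff
  rw [if_pos (by constructor <;> [simp [hay]; linarith])]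
  rw [← Finset.sum_range_reflect]
  refine Finset.sum_congr rfl fun j hj => ?_
  have hjk : j ≤ k := Nat.lt_succ_iff.mp (Finset.mem_range.mp hj)
  have h1 : k + 1 - 1 - j = k - j := by omega
  have h2 : k - (k - j) = j := by omega
  rw [h1, h2, Nat.choose_symm hjk, zsmul_eq_mul, nsmul_eq_mul, Nat.cast_sub hjk]
  push_cast
  have harg : y + ((k:ℝ) - (j:ℝ)) * u = y + ((k:ℝ)/2) * u + ((k:ℝ)/2 - (j:ℝ)) * u := by ring
  rw [harg]


lemma itd_zero_fun (n : ℕ) : iteratedDeriv n (fun _ : ℝ => (0:ℝ)) = fun _ => (0:ℝ) := by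
  induction n with
  | zero => funext x; simp
  | succ n IH => rw [iteratedDeriv_succ', show deriv (fun _ : ℝ => (0:ℝ)) = fun _ => (0:ℝ) from
      funext fun x => deriv_const x 0, IH]

lemma itd_fun_add {n : ℕ} {f g : ℝ → ℝ} (hf : ContDiff ℝ (n:ℕ) f) (hg : ContDiff ℝ (n:ℕ) g) :
    iteratedDeriv n (fun x => f x + g x) = fun x => iteratedDeriv n f x + iteratedDeriv n g x := by
  funext x
  simp only [← iteratedDerivWithin_univ]
  exact iteratedDerivWithin_add (mem_univ x) uniqueDiffOn_univ hf.contDiffAt.contDiffWithinAt hg.contDiffAt.contDiffWithinAt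

lemma itd_fun_sum {ι : Type*} (s : Finset ι) (F : ι → ℝ → ℝ) (n : ℕ)
    (h : ∀ i ∈ s, ContDiff ℝ (n:ℕ) (F i)) :
    iteratedDeriv n (fun x => ∑ i ∈ s, F i x) = fun x => ∑ i ∈ s, iteratedDeriv n (F i) x := by
  classical
  induction s using Finset.induction with
  | empty => simpa using itd_zero_fun n
  | @insert a s ha IH =>
    have hFa : ContDiff ℝ (n:ℕ) (F a) := h a (Finset.mem_insert_self a s)
    have hFs : ContDiff ℝ (n:ℕ) (fun x => ∑ i ∈ s, F i x) :=
      ContDiff.sum fun i hi => h i (Finset.mem_insert_of_mem hi)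
    have hstep : (fun x => ∑ i ∈ insert a s, F i x)
        = fun x => F a x + ∑ i ∈ s, F i x := by
      funext x; rw [Finset.sum_insert ha]
    rw [hstep, itd_fun_add hFa hFs, IH (fun i hi => h i (Finset.mem_insert_of_mem hi))]
    funext x
    rw [Finset.sum_insert ha]

lemma itdw_eq_itd {f : ℝ → ℝ} {K : ℕ} (hf : ContDiff ℝ (K:ℕ) f) {s : Set ℝ}
    (hs : UniqueDiffOn ℝ s) :
    ∀ n, n ≤ K → Set.EqOn (iteratedDerivWithin n f s) (iteratedDeriv n f) s := by
  intro n
  induction n with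
  | zero => intro _ y _; simp [iteratedDerivWithin_zero, iteratedDeriv_zero]
  | succ n IH =>
    intro hn y hy
    rw [iteratedDerivWithin_succ, iteratedDeriv_succ]
    rw [derivWithin_congr (IH (by omega)) (IH (by omega) hy)]
    exact ((hf.differentiable_iteratedDeriv n
      (by exact_mod_cast Nat.lt_of_succ_le hn)).differentiableAt).derivWithin
      (hs.uniqueDiffWithinAt hy)

/-- Comparison of sup norms of a polynomial of degree `< k` on nested intervals. -/
lemma poly_bound (k : ℕ) (hk : 1 ≤ k) (p : Polynomial ℝ) (hdeg : p.natDegree ≤ k - 1)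
    (c d : ℝ) (hcd : c < d) (M : ℝ) (hM : ∀ y ∈ Set.Icc c d, |p.eval y| ≤ M) :
    ∀ x, c - (d - c) ≤ x → x ≤ d + (d - c) →
      |p.eval x| ≤ (k:ℝ) * (3*k)^(k-1) * M := by
  intro x hx1 hx2
  have hdc : 0 < d - c := by linarith
  set s : ℝ := (d - c) / k with hs
  have hspos : 0 < s := by positivity
  set v : ℕ → ℝ := fun j => c + j * s with hv
  have hinj : Set.InjOn v (Finset.range k) := by
    intro i _ j _ hij
    have : (i:ℝ) = (j:ℝ) := by
      have := hij
      simp only [hv] at this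
      have h2 : (i:ℝ) * s = (j:ℝ) * s := by linarith
      exact mul_right_cancel₀ hspos.ne' h2
    exact_mod_cast this
  have hdlt : p.degree < (Finset.range k).card := by
    rw [Finset.card_range]
    calc p.degree ≤ (p.natDegree : WithBot ℕ) := degree_le_natDegree
      _ < (k : WithBot ℕ) := by exact_mod_cast show p.natDegree < k by omega
  have heq := Lagrange.eq_interpolate hinj hdlt
  have heval : p.eval x = ∑ i ∈ Finset.range k,
      p.eval (v i) * (Lagrange.basis (Finset.range k) v i).eval x := by
    conv_lhs => rw [heq]
    rw [Lagrange.interpolate_apply, Polynomial.eval_finset_sum]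
    exact Finset.sum_congr rfl fun i _ => by rw [eval_mul, eval_C]
  have hM0 : 0 ≤ M := le_trans (abs_nonneg _) (hM c ⟨le_refl c, hcd.le⟩)
  have hvmem : ∀ i ∈ Finset.range k, v i ∈ Set.Icc c d := by
    intro i hi
    have hik : (i:ℝ) ≤ (k:ℝ) - 1 := by
      have : i ≤ k - 1 := by have := Finset.mem_range.mp hi; omega
      have h2 : (i:ℝ) ≤ ((k-1:ℕ):ℝ) := by exact_mod_cast this
      rwa [Nat.cast_sub hk, Nat.cast_one] at h2
    constructor
    · simp only [hv]
      nlinarith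
    · simp only [hv]
      have : (i:ℝ) * s ≤ ((k:ℝ) - 1) * s := by nlinarith
      have hks : (k:ℝ) * s = d - c := by
        rw [hs]; field_simp
      nlinarith
  have hbasis : ∀ i ∈ Finset.range k,
      |(Lagrange.basis (Finset.range k) v i).eval x| ≤ (3*(k:ℝ))^(k-1) := by
    intro i hi
    rw [Lagrange.basis, Polynomial.eval_prod, Finset.abs_prod]
    have hcard : ((Finset.range k).erase i).card = k - 1 := by
      rw [Finset.card_erase_of_mem hi, Finset.card_range]
    calc ∏ j ∈ (Finset.range k).erase i, |(Lagrange.basisDivisor (v i) (v j)).eval x|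
        ≤ ∏ _j ∈ (Finset.range k).erase i, (3*(k:ℝ)) := by
          refine Finset.prod_le_prod (fun j _ => abs_nonneg _) fun j hj => ?_
          have hji : j ≠ i := (Finset.mem_erase.mp hj).1
          have hjr : j ∈ Finset.range k := (Finset.mem_erase.mp hj).2
          rw [Lagrange.basisDivisor, eval_mul, eval_C, eval_sub, eval_X, eval_C, abs_mul, abs_inv]
          have hvij : |v i - v j| ≥ s := by
            have : v i - v j = ((i:ℝ) - j) * s := by simp only [hv]; ring
            rw [this, abs_mul, abs_of_pos hspos]
            have h1 : (1:ℝ) ≤ |(i:ℝ) - j| := by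
              have : (i:ℝ) - j ≠ 0 :=
                sub_ne_zero.mpr fun h => (Ne.symm hji) (Nat.cast_injective h)
              have hint : ∃ z : ℤ, (i:ℝ) - j = z := ⟨(i:ℤ) - j, by push_cast; ring⟩
              obtain ⟨z, hz⟩ := hint
              rw [hz] at this ⊢
              have : z ≠ 0 := by exact_mod_cast this
              have : 1 ≤ |z| := Int.one_le_abs (by omega)
              calc (1:ℝ) ≤ (|z| : ℤ) := by exact_mod_cast this
                _ = |(z:ℝ)| := Int.cast_abs
            nlinarith
          have hxvj : |x - v j| ≤ 3 * (d - c) := by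
            have hj1 : c ≤ v j := (hvmem j hjr).1
            have hj2 : v j ≤ d := (hvmem j hjr).2
            rw [abs_le]
            constructor <;> nlinarith
          have hks : (k:ℝ) * s = d - c := by rw [hs]; field_simp
          calc |v i - v j|⁻¹ * |x - v j| ≤ s⁻¹ * (3 * (d - c)) := by
                apply mul_le_mul (by
                  rw [inv_le_inv₀ (lt_of_lt_of_le hspos hvij) hspos]
                  exact hvij) hxvj (abs_nonneg _) (by positivity)
            _ = 3 * (k:ℝ) := by
                field_simp
                nlinarith
      _ = (3*(k:ℝ))^(k-1) := by rw [Finset.prod_const, hcard]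
  rw [heval]
  calc |∑ i ∈ Finset.range k, p.eval (v i) * (Lagrange.basis (Finset.range k) v i).eval x|
      ≤ ∑ i ∈ Finset.range k, |p.eval (v i) * (Lagrange.basis (Finset.range k) v i).eval x| :=
        Finset.abs_sum_le_sum_abs _ _
    _ ≤ ∑ _i ∈ Finset.range k, M * (3*(k:ℝ))^(k-1) := by
        refine Finset.sum_le_sum fun i hi => ?_
        rw [abs_mul]
        exact mul_le_mul (hM _ (hvmem i hi)) (hbasis i hi) (abs_nonneg _) hM0
    _ = (k:ℝ) * (3*(k:ℝ))^(k-1) * M := by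
        rw [Finset.sum_const, Finset.card_range]
        push_cast
        ring
  


theorem lemmaM (k : ℕ) (hk : 1 ≤ k) (f : ℝ → ℝ) (hf : Continuous f) (a b : ℝ) (hab : a < b) :
    ∃ P : Polynomial ℝ, P.natDegree ≤ k - 1 ∧ ∀ x, a ≤ x → x ≤ b - (b-a)/4 →
      |f x - P.eval x| ≤ (1 + 2^k * (4*(k:ℝ)^2)^k) * smoothOmega k f (b - a) a b := by
  set W := smoothOmega k f (b - a) a b with hW
  have hW0 : 0 ≤ W := omega_nonneg k f (b-a) a b
  have hba : 0 < b - a := by linarith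
  have hkR : (1:ℝ) ≤ (k:ℝ) := by exact_mod_cast hk
  set η : ℝ := (b-a)/(4*(k:ℝ)^2) with hη
  have hηpos : 0 < η := by rw [hη]; positivity
  have hδ : (k:ℝ) * ((k:ℝ) * η) = (b-a)/4 := by
    rw [hη]; field_simp
  have hkη_le : (k:ℝ) * η ≤ b - a := by nlinarith
  -- Main bound on the auxiliary integral averages
  have hGb : ∀ m : ℕ, ∀ v : ℝ, 0 ≤ v → v + (m:ℝ)*η ≤ (k:ℝ)*η →
      ∀ x, a ≤ x → x ≤ b - (b-a)/4 → |Gfun k f η m v x| ≤ W := by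
    intro m
    induction m with
    | zero =>
      intro v hv hvk x hax hxb
      simp only [Nat.cast_zero, zero_mul, add_zero] at hvk
      have hG0 : Gfun k f η 0 v x
          = ∑ i ∈ Finset.range (k+1), (-1:ℝ)^i * (k.choose i) * f (x + (i:ℝ)*v) := rfl
      rcases hv.eq_or_lt with rfl | hvpos
      · rw [hG0]
        simp only [mul_zero, add_zero]
        rw [← Finset.sum_mul]
        have hz : ∑ i ∈ Finset.range (k+1), (-1:ℝ)^i * (k.choose i) = 0 := by
          have h1 := Int.alternating_sum_range_choose (n := k)
          rw [if_neg (by omega)] at h1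
          exact_mod_cast h1
        rw [hz, zero_mul, abs_zero]
        exact hW0
      · have hsum : Gfun k f η 0 v x = (-1:ℝ)^k * (fwdDiff v)^[k] f x := by
          rw [hG0, fwdDiff_iter_eq_sum_shift, Finset.mul_sum]
          refine Finset.sum_congr rfl fun i hi => ?_
          have hik : i ≤ k := Nat.lt_succ_iff.mp (Finset.mem_range.mp hi)
          rw [zsmul_eq_mul, nsmul_eq_mul, neg1_split hik]
          push_cast
          ring
        rw [hsum, abs_mul, abs_pow, abs_neg, abs_one, one_pow, one_mul]
        refine fwdDiff_le_omega hab.le hf hvpos ?_ hax ?_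
        · nlinarith
        · nlinarith
    | succ m IH =>
      intro v hv hvk x hax hxb
      rw [Gfun_succ hηpos hf]
      have hbound : ∀ t ∈ Set.uIoc (0:ℝ) η, ‖Gfun k f η m (v+t) x‖ ≤ W := by
        intro t ht
        rw [Set.uIoc_of_le hηpos.le] at ht
        have h1 : 0 ≤ v + t := by linarith [ht.1]
        have h2 : (v+t) + (m:ℝ)*η ≤ (k:ℝ)*η := by
          push_cast at hvk
          linarith [ht.2]
        simpa [Real.norm_eq_abs] using IH (v+t) h1 h2 x hax hxb
      have hint := intervalIntegral.norm_integral_le_of_norm_le_const hbound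
      rw [Real.norm_eq_abs, sub_zero, abs_of_pos hηpos] at hint
      calc |(∫ t in (0:ℝ)..η, Gfun k f η m (v+t) x) / η|
          = |∫ t in (0:ℝ)..η, Gfun k f η m (v+t) x| / η := by
            rw [abs_div, abs_of_pos hηpos]
        _ ≤ (W * η) / η := by
            exact div_le_div_of_nonneg_right hint hηpos.le
        _ = W := by field_simp
  -- the smoothed function
  set fδ : ℝ → ℝ := fun x => ∑ i ∈ Finset.range k,
    ((-1:ℝ)^i * (k.choose (i+1))) * StekIt (((i:ℝ)+1)*η) k f x with hfδ
  have hne : ∀ i : ℕ, ((i:ℝ)+1)*η ≠ 0 := fun i => by positivity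
  have hrep : ∀ x, f x - fδ x = Gfun k f η k 0 x := by
    intro x
    have hG : Gfun k f η k 0 x
        = (∑ i ∈ Finset.range k, (-1:ℝ)^(i+1) * (k.choose (i+1)) * StekIt (((i:ℝ)+1)*η) k f x)
          + f x := by
      show (∑ i ∈ Finset.range (k+1),
          (-1:ℝ)^i * (k.choose i) * StekIt ((i:ℝ)*η) k f (x + (i:ℝ)*0)) = _
      rw [Finset.sum_range_succ']
      congr 1
      · refine Finset.sum_congr rfl fun i _ => ?_
        push_cast
        rw [mul_zero, add_zero]
      · simp [stekIt_zero]
    rw [hG]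
    have hkey : fδ x + (∑ i ∈ Finset.range k,
        (-1:ℝ)^(i+1) * (k.choose (i+1)) * StekIt (((i:ℝ)+1)*η) k f x) = 0 := by
      rw [hfδ, ← Finset.sum_add_distrib]
      refine Finset.sum_eq_zero fun i _ => ?_
      ring
    linarith
  have hfδcd : ContDiff ℝ (k:ℕ) fδ := by
    rw [hfδ]
    exact ContDiff.sum fun i _ => contDiff_const.mul (stekIt_contDiff_deriv (hne i) k hf).1
  have hitd : iteratedDeriv k fδ = fun x => ∑ i ∈ Finset.range k,
      (-1:ℝ)^i * (k.choose (i+1)) * ((fwdDiff (((i:ℝ)+1)*η))^[k] f x / (((i:ℝ)+1)*η)^k) := by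
    rw [hfδ, itd_fun_sum _ _ k (fun i _ => contDiff_const.mul
      (stekIt_contDiff_deriv (hne i) k hf).1)]
    funext x
    refine Finset.sum_congr rfl fun i _ => ?_
    rw [itd_const_mul _ (stekIt_contDiff_deriv (hne i) k hf).1,
      (stekIt_contDiff_deriv (hne i) k hf).2]
  have hAb : ∀ y, a ≤ y → y ≤ b - (b-a)/4 → |iteratedDeriv k fδ y| ≤ 2^k * W / η^k := by
    intro y hay hyb
    rw [hitd]
    have hterm : ∀ i ∈ Finset.range k,
        |(-1:ℝ)^i * (k.choose (i+1)) * ((fwdDiff (((i:ℝ)+1)*η))^[k] f y / (((i:ℝ)+1)*η)^k)|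
          ≤ (k.choose (i+1) : ℝ) * (W / η^k) := by
      intro i hi
      have hi1k : (i:ℝ) + 1 ≤ (k:ℝ) := by
        have : i + 1 ≤ k := Finset.mem_range.mp hi
        exact_mod_cast this
      have hu : 0 < ((i:ℝ)+1)*η := by positivity
      have hΔ : |(fwdDiff (((i:ℝ)+1)*η))^[k] f y| ≤ W := by
        refine fwdDiff_le_omega hab.le hf hu ?_ hay ?_
        · nlinarith
        · nlinarith
      rw [abs_mul, abs_mul, abs_pow, abs_neg, abs_one, one_pow, one_mul, Nat.abs_cast,
        abs_div, abs_pow, abs_of_pos hu]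
      refine mul_le_mul_of_nonneg_left ?_ (Nat.cast_nonneg _)
      refine div_le_div₀ hW0 hΔ (by positivity) ?_
      exact pow_le_pow_left₀ hηpos.le (by nlinarith) k
    calc |∑ i ∈ Finset.range k,
        (-1:ℝ)^i * (k.choose (i+1)) * ((fwdDiff (((i:ℝ)+1)*η))^[k] f y / (((i:ℝ)+1)*η)^k)|
        ≤ ∑ i ∈ Finset.range k,
          |(-1:ℝ)^i * (k.choose (i+1)) * ((fwdDiff (((i:ℝ)+1)*η))^[k] f y / (((i:ℝ)+1)*η)^k)| :=
          Finset.abs_sum_le_sum_abs _ _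
      _ ≤ ∑ i ∈ Finset.range k, (k.choose (i+1) : ℝ) * (W / η^k) := Finset.sum_le_sum hterm
      _ ≤ 2^k * W / η^k := by
          rw [← Finset.sum_mul]
          have hch : ∑ i ∈ Finset.range k, (k.choose (i+1) : ℝ) ≤ 2^k := by
            have h1 : ∑ i ∈ Finset.range k, k.choose (i+1) ≤ 2^k := by
              have h2 := Nat.sum_range_choose k
              have h3 : ∑ i ∈ Finset.range (k+1), k.choose i
                  = (∑ i ∈ Finset.range k, k.choose (i+1)) + k.choose 0 :=
                Finset.sum_range_succ' _ k
              omega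
            calc (∑ i ∈ Finset.range k, (k.choose (i+1) : ℝ))
                = ((∑ i ∈ Finset.range k, k.choose (i+1) : ℕ) : ℝ) := by push_cast; rfl
              _ ≤ ((2^k : ℕ) : ℝ) := by exact_mod_cast h1
              _ = 2^k := by push_cast; rfl
          calc (∑ i ∈ Finset.range k, (k.choose (i+1) : ℝ)) * (W / η^k)
              ≤ 2^k * (W / η^k) := mul_le_mul_of_nonneg_right hch (by positivity)
            _ = 2^k * W / η^k := by ring
  -- Taylor polynomial of fδ at a
  set Pt : Polynomial ℝ := ∑ j ∈ Finset.range k,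
    Polynomial.C (iteratedDeriv j fδ a / (j.factorial : ℝ)) * (Polynomial.X - Polynomial.C a)^j
    with hPt
  have hPdeg : Pt.natDegree ≤ k - 1 := by
    rw [hPt]
    refine Polynomial.natDegree_sum_le_of_forall_le _ _ fun j hj => ?_
    calc (Polynomial.C (iteratedDeriv j fδ a / (j.factorial : ℝ))
          * (Polynomial.X - Polynomial.C a)^j).natDegree
        ≤ (Polynomial.C (iteratedDeriv j fδ a / (j.factorial : ℝ))).natDegree
          + ((Polynomial.X - Polynomial.C a)^j).natDegree := Polynomial.natDegree_mul_le
      _ ≤ j := by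
          rw [Polynomial.natDegree_C, Polynomial.natDegree_pow, Polynomial.natDegree_X_sub_C]
          omega
      _ ≤ k - 1 := by have := Finset.mem_range.mp hj; omega
  have hPteval : ∀ x, Pt.eval x
      = ∑ j ∈ Finset.range k, iteratedDeriv j fδ a / (j.factorial : ℝ) * (x - a)^j := by
    intro x
    rw [hPt, Polynomial.eval_finset_sum]
    refine Finset.sum_congr rfl fun j _ => ?_
    rw [Polynomial.eval_mul, Polynomial.eval_C, Polynomial.eval_pow, Polynomial.eval_sub,
      Polynomial.eval_X, Polynomial.eval_C]
  have hnn : 0 ≤ 2^k * W / η^k :=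
    div_nonneg (mul_nonneg (by positivity) hW0) (le_of_lt (pow_pos hηpos k))
  have hnn2 : 0 ≤ (2^k * W / η^k) * (b-a)^k := mul_nonneg hnn (by positivity)
  have hTay : ∀ x, a ≤ x → x ≤ b - (b-a)/4 →
      |fδ x - Pt.eval x| ≤ (2^k * W / η^k) * (b-a)^k / (k.factorial : ℝ) := by
    intro x hax hxb
    rcases hax.eq_or_lt with rfl | haxlt
    · have hPa : Pt.eval a = fδ a := by
        rw [hPteval, Finset.sum_eq_single 0]
        · simp
        · intro j _ hj0
          rw [sub_self, zero_pow hj0, mul_zero]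
        · intro h0
          exact absurd (Finset.mem_range.mpr (by omega)) h0
      rw [hPa, sub_self, abs_zero]
      exact div_nonneg hnn2 (Nat.cast_nonneg _)
    · have hk1 : k - 1 + 1 = k := by omega
      have hUD : UniqueDiffOn ℝ (Icc a x) := uniqueDiffOn_Icc haxlt
      have hEq : ∀ n, n ≤ k → Set.EqOn (iteratedDerivWithin n fδ (Icc a x))
          (iteratedDeriv n fδ) (Icc a x) := itdw_eq_itd hfδcd hUD
      have hcd' : ContDiffOn ℝ ((k-1:ℕ):WithTop ℕ∞) fδ (Icc a x) :=
        (hfδcd.of_le (by exact_mod_cast Nat.sub_le k 1)).contDiffOn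
      have hdiffOn : DifferentiableOn ℝ (iteratedDerivWithin (k-1) fδ (Icc a x)) (Ioo a x) := by
        have hdOn : DifferentiableOn ℝ (iteratedDeriv (k-1) fδ) (Ioo a x) :=
          (hfδcd.differentiable_iteratedDeriv (k-1)
            (by exact_mod_cast (by omega : k-1 < k))).differentiableOn
        exact hdOn.congr fun y hy => hEq (k-1) (by omega) (Ioo_subset_Icc_self hy)
      obtain ⟨x', hx', hrem⟩ := taylor_mean_remainder_lagrange (n := k-1) haxlt.ne
        (by rw [Set.uIcc_of_le haxlt.le]; exact hcd')
        (by rw [Set.uIcc_of_le haxlt.le, Set.uIoo_of_le haxlt.le]; exact hdiffOn)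
      rw [Set.uIoo_of_le haxlt.le] at hx'
      rw [Set.uIcc_of_le haxlt.le] at hrem
      have htv : taylorWithinEval fδ (k-1) (Icc a x) a x = Pt.eval x := by
        rw [taylor_within_apply, hPteval, hk1]
        refine Finset.sum_congr rfl fun j hj => ?_
        have hjk : j ≤ k := by have := Finset.mem_range.mp hj; omega
        rw [hEq j hjk (left_mem_Icc.mpr haxlt.le), smul_eq_mul]
        ring
      rw [htv, hk1] at hrem
      rw [hrem]
      rw [hEq k le_rfl (Ioo_subset_Icc_self hx')]
      have hx'a : a ≤ x' := (Ioo_subset_Icc_self hx').1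
      have hx'b : x' ≤ b - (b-a)/4 := le_trans (Ioo_subset_Icc_self hx').2 hxb
      have hD := hAb x' hx'a hx'b
      have hxa0 : 0 ≤ x - a := by linarith
      have hxab : |x - a| ≤ b - a := by rw [abs_of_nonneg hxa0]; linarith
      have hfact : |((k.factorial:ℝ))| = (k.factorial:ℝ) :=
        abs_of_pos (by exact_mod_cast k.factorial_pos)
      rw [abs_div, abs_mul, abs_pow, hfact]
      refine div_le_div₀ hnn2 ?_ (by exact_mod_cast k.factorial_pos) le_rfl
      exact mul_le_mul hD (pow_le_pow_left₀ (abs_nonneg _) hxab k) (by positivity) hnn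
  refine ⟨Pt, hPdeg, ?_⟩
  intro x hax hxb
  have h1 : |f x - fδ x| ≤ W := by
    rw [hrep x]
    exact hGb k 0 le_rfl (by simp) x hax hxb
  have h2 := hTay x hax hxb
  have hconv : (2^k * W / η^k) * (b-a)^k = 2^k * (4*(k:ℝ)^2)^k * W := by
    have hq : (b-a)^k / η^k = (4*(k:ℝ)^2)^k := by
      rw [← div_pow, hη]
      congr 1
      field_simp
    calc (2^k * W / η^k) * (b-a)^k = 2^k * W * ((b-a)^k / η^k) := by ring
      _ = 2^k * W * (4*(k:ℝ)^2)^k := by rw [hq]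
      _ = 2^k * (4*(k:ℝ)^2)^k * W := by ring
  have h3 : (2^k * W / η^k) * (b-a)^k / (k.factorial:ℝ) ≤ 2^k * (4*(k:ℝ)^2)^k * W := by
    have hf1 : (1:ℝ) ≤ (k.factorial:ℝ) := by exact_mod_cast k.factorial_pos
    calc (2^k * W / η^k) * (b-a)^k / (k.factorial:ℝ) ≤ (2^k * W / η^k) * (b-a)^k :=
        div_le_self hnn2 hf1
      _ = 2^k * (4*(k:ℝ)^2)^k * W := hconv
  calc |f x - Pt.eval x| ≤ |f x - fδ x| + |fδ x - Pt.eval x| := abs_sub_le _ _ _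
    _ ≤ W + 2^k * (4*(k:ℝ)^2)^k * W := add_le_add h1 (le_trans h2 h3)
    _ = (1 + 2^k * (4*(k:ℝ)^2)^k) * W := by ring



theorem stmt13 (k : ℕ) (hk : 1 ≤ k) :
    ∃ c : ℝ, 0 < c ∧ ∀ a b : ℝ, a < b → ∀ F : ℝ → ℝ, ContinuousOn F (Set.Icc a b) →
      sInf {v : ℝ | ∃ P : Polynomial ℝ, P.natDegree ≤ k - 1 ∧
          v = supNorm (fun y => F y - P.eval y) a b} ≤
        c * smoothOmega k F (b - a) a b := by
  have hkR : (1:ℝ) ≤ (k:ℝ) := by exact_mod_cast hk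
  set C1 : ℝ := 1 + 2^k * (4*(k:ℝ)^2)^k with hC1
  set CL : ℝ := (k:ℝ) * (3*(k:ℝ))^(k-1) with hCL
  have hC1pos : 0 < C1 := by rw [hC1]; positivity
  have hCLpos : 0 < CL := by
    rw [hCL]
    exact mul_pos (by linarith) (pow_pos (by linarith) _)
  refine ⟨C1 * (1 + 2*CL), mul_pos hC1pos (by linarith), ?_⟩
  intro a b hab F hF
  have hable : a ≤ b := hab.le
  have hba : (0:ℝ) < b - a := by linarith
  set f : ℝ → ℝ := fun x => F ((Set.projIcc a b hable x : ℝ)) with hfdef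
  have hfc : Continuous f := by
    have h1 : Continuous (fun x : ℝ => ((Set.projIcc a b hable x : ℝ))) :=
      continuous_subtype_val.comp continuous_projIcc
    exact hF.comp_continuous h1 (fun x => Subtype.coe_prop _)
  have hfeq : ∀ x ∈ Set.Icc a b, f x = F x := by
    intro x hx
    rw [hfdef]
    simp only [Set.projIcc_of_mem hable hx]
  have hWeq : smoothOmega k F (b-a) a b = smoothOmega k f (b-a) a b :=
    smoothOmega_congr (fun y hy => (hfeq y hy).symm)
  set W := smoothOmega k f (b-a) a b with hW
  have hW0 : 0 ≤ W := by rw [hW]; exact omega_nonneg k f (b-a) a b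
  obtain ⟨P, hPdeg, hP⟩ := lemmaM k hk f hfc a b hab
  set fr : ℝ → ℝ := fun x => f (a + b - x) with hfr
  have hfrc : Continuous fr := hfc.comp (continuous_const.sub continuous_id)
  obtain ⟨Q', hQ'deg, hQ'⟩ := lemmaM k hk fr hfrc a b hab
  have hWr : smoothOmega k fr (b-a) a b = W := by
    rw [hfr, hW]
    exact smoothOmega_reflect k f (b-a) a b
  set Q : Polynomial ℝ := Q'.comp (Polynomial.C (a+b) - Polynomial.X) with hQdef
  have hQdeg : Q.natDegree ≤ k - 1 := by
    have hlin : (Polynomial.C (a+b) - Polynomial.X : Polynomial ℝ).natDegree = 1 := by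
      have h1 : (Polynomial.C (a+b) - Polynomial.X : Polynomial ℝ)
          = -(Polynomial.X - Polynomial.C (a+b)) := by ring
      rw [h1, Polynomial.natDegree_neg, Polynomial.natDegree_X_sub_C]
    calc Q.natDegree ≤ Q'.natDegree * (Polynomial.C (a+b) - Polynomial.X : Polynomial ℝ).natDegree :=
        Polynomial.natDegree_comp_le
      _ ≤ (k-1) * 1 := by rw [hlin]; exact Nat.mul_le_mul hQ'deg le_rfl
      _ = k - 1 := by omega
  have hQev : ∀ x : ℝ, Q.eval x = Q'.eval (a + b - x) := by
    intro x
    rw [hQdef, Polynomial.eval_comp, Polynomial.eval_sub, Polynomial.eval_C, Polynomial.eval_X]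
  have hQbound : ∀ x, a + (b-a)/4 ≤ x → x ≤ b → |f x - Q.eval x| ≤ C1 * W := by
    intro x h1 h2
    have h3 : a ≤ a + b - x := by linarith
    have h4 : a + b - x ≤ b - (b-a)/4 := by linarith
    have h5 := hQ' (a+b-x) h3 h4
    rw [hWr, ← hC1] at h5
    rw [hQev]
    have h6 : fr (a+b-x) = f x := by
      rw [hfr]
      simp only []
      congr 1
      ring
    rwa [h6] at h5
  have hover : ∀ y, a + (b-a)/4 ≤ y → y ≤ b - (b-a)/4 → |(P - Q).eval y| ≤ 2 * (C1 * W) := by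
    intro y h1 h2
    rw [Polynomial.eval_sub]
    have hp := hP y (by linarith) h2
    rw [← hC1] at hp
    have hq := hQbound y h1 (by linarith)
    calc |P.eval y - Q.eval y| ≤ |P.eval y - f y| + |f y - Q.eval y| := abs_sub_le _ _ _
      _ ≤ C1*W + C1*W := add_le_add (by rwa [abs_sub_comm]) hq
      _ = 2 * (C1*W) := by ring
  have hc0d0 : a + (b-a)/4 < b - (b-a)/4 := by linarith
  have hPQg : ∀ x, a ≤ x → x ≤ b → |(P-Q).eval x| ≤ CL * (2 * (C1*W)) := by
    intro x h1 h2
    have hd := poly_bound k hk (P - Q)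
      (le_trans (Polynomial.natDegree_sub_le P Q) (Nat.max_le.mpr ⟨hPdeg, hQdeg⟩))
      (a + (b-a)/4) (b - (b-a)/4) hc0d0 (2*(C1*W))
      (fun y hy => hover y hy.1 hy.2) x (by linarith) (by linarith)
    rw [← hCL] at hd
    exact hd
  have hfinal : ∀ x ∈ Set.Icc a b, |F x - P.eval x| ≤ C1*(1+2*CL)*W := by
    intro x hx
    rw [← hfeq x hx]
    by_cases hcase : x ≤ b - (b-a)/4
    · have h7 := hP x hx.1 hcase
      rw [← hC1] at h7
      calc |f x - P.eval x| ≤ C1 * W := h7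
        _ ≤ C1*(1+2*CL)*W := by nlinarith [mul_nonneg (mul_nonneg hC1pos.le hCLpos.le) hW0]
    · push_neg at hcase
      have hx1 : a + (b-a)/4 ≤ x := by linarith
      have h5 := hQbound x hx1 hx.2
      have h6 := hPQg x hx.1 hx.2
      rw [Polynomial.eval_sub] at h6
      calc |f x - P.eval x| ≤ |f x - Q.eval x| + |Q.eval x - P.eval x| := abs_sub_le _ _ _
        _ ≤ C1*W + CL*(2*(C1*W)) := add_le_add h5 (by rwa [abs_sub_comm])
        _ = C1*(1+2*CL)*W := by ring
  have hsup : supNorm (fun y => F y - P.eval y) a b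
      ≤ C1*(1+2*CL) * smoothOmega k F (b-a) a b := by
    rw [hWeq]
    unfold _root_.supNorm
    apply Real.sSup_le
    · rintro w ⟨x, hx, rfl⟩
      calc |F x - P.eval x| ≤ C1*(1+2*CL)*W := hfinal x hx
        _ = C1*(1+2*CL)*W := rfl
    · have h8 : 0 ≤ C1 * (1 + 2*CL) := le_of_lt (mul_pos hC1pos (by linarith))
      exact mul_nonneg h8 hW0
  have hbdd : BddBelow {v : ℝ | ∃ P : Polynomial ℝ, P.natDegree ≤ k - 1 ∧
      v = supNorm (fun y => F y - P.eval y) a b} := by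
    refine ⟨0, ?_⟩
    rintro v ⟨P', _, rfl⟩
    unfold _root_.supNorm
    exact Real.sSup_nonneg (by rintro w ⟨x, hx, rfl⟩; positivity)
  exact le_trans (csInf_le hbdd ⟨P, hPdeg, rfl⟩) hsup

end Whitney13

open Whitney13 in
/-- the Whitney inequality. -/
theorem stmt13 (k : ℕ) (hk : 1 ≤ k) :
    ∃ c : ℝ, 0 < c ∧ ∀ a b : ℝ, a < b → ∀ F : ℝ → ℝ, ContinuousOn F (Set.Icc a b) →
      sInf {v : ℝ | ∃ P : Polynomial ℝ, P.natDegree ≤ k - 1 ∧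
          v = supNorm (fun y => F y - P.eval y) a b} ≤
        c * smoothOmega k F (b - a) a b := by
  have hkR : (1:ℝ) ≤ (k:ℝ) := by exact_mod_cast hk
  set C1 : ℝ := 1 + 2^k * (4*(k:ℝ)^2)^k with hC1
  set CL : ℝ := (k:ℝ) * (3*(k:ℝ))^(k-1) with hCL
  have hC1pos : 0 < C1 := by rw [hC1]; positivity
  have hCLpos : 0 < CL := by
    rw [hCL]
    exact mul_pos (by linarith) (pow_pos (by linarith) _)
  refine ⟨C1 * (1 + 2*CL), mul_pos hC1pos (by linarith), ?_⟩
  intro a b hab F hF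
  have hable : a ≤ b := hab.le
  have hba : (0:ℝ) < b - a := by linarith
  set f : ℝ → ℝ := fun x => F ((Set.projIcc a b hable x : ℝ)) with hfdef
  have hfc : Continuous f := by
    have h1 : Continuous (fun x : ℝ => ((Set.projIcc a b hable x : ℝ))) :=
      continuous_subtype_val.comp continuous_projIcc
    exact hF.comp_continuous h1 (fun x => Subtype.coe_prop _)
  have hfeq : ∀ x ∈ Set.Icc a b, f x = F x := by
    intro x hx
    rw [hfdef]
    simp only [Set.projIcc_of_mem hable hx]
  have hWeq : smoothOmega k F (b-a) a b = smoothOmega k f (b-a) a b :=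
    smoothOmega_congr (fun y hy => (hfeq y hy).symm)
  set W := smoothOmega k f (b-a) a b with hW
  have hW0 : 0 ≤ W := by rw [hW]; exact omega_nonneg k f (b-a) a b
  obtain ⟨P, hPdeg, hP⟩ := lemmaM k hk f hfc a b hab
  set fr : ℝ → ℝ := fun x => f (a + b - x) with hfr
  have hfrc : Continuous fr := hfc.comp (continuous_const.sub continuous_id)
  obtain ⟨Q', hQ'deg, hQ'⟩ := lemmaM k hk fr hfrc a b hab
  have hWr : smoothOmega k fr (b-a) a b = W := by
    rw [hfr, hW]
    exact smoothOmega_reflect k f (b-a) a b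
  set Q : Polynomial ℝ := Q'.comp (Polynomial.C (a+b) - Polynomial.X) with hQdef
  have hQdeg : Q.natDegree ≤ k - 1 := by
    have hlin : (Polynomial.C (a+b) - Polynomial.X : Polynomial ℝ).natDegree = 1 := by
      have h1 : (Polynomial.C (a+b) - Polynomial.X : Polynomial ℝ)
          = -(Polynomial.X - Polynomial.C (a+b)) := by ring
      rw [h1, Polynomial.natDegree_neg, Polynomial.natDegree_X_sub_C]
    calc Q.natDegree ≤ Q'.natDegree * (Polynomial.C (a+b) - Polynomial.X : Polynomial ℝ).natDegree :=
        Polynomial.natDegree_comp_le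
      _ ≤ (k-1) * 1 := by rw [hlin]; exact Nat.mul_le_mul hQ'deg le_rfl
      _ = k - 1 := by omega
  have hQev : ∀ x : ℝ, Q.eval x = Q'.eval (a + b - x) := by
    intro x
    rw [hQdef, Polynomial.eval_comp, Polynomial.eval_sub, Polynomial.eval_C, Polynomial.eval_X]
  have hQbound : ∀ x, a + (b-a)/4 ≤ x → x ≤ b → |f x - Q.eval x| ≤ C1 * W := by
    intro x h1 h2
    have h3 : a ≤ a + b - x := by linarith
    have h4 : a + b - x ≤ b - (b-a)/4 := by linarith
    have h5 := hQ' (a+b-x) h3 h4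
    rw [hWr, ← hC1] at h5
    rw [hQev]
    have h6 : fr (a+b-x) = f x := by
      rw [hfr]
      simp only []
      congr 1
      ring
    rwa [h6] at h5
  have hover : ∀ y, a + (b-a)/4 ≤ y → y ≤ b - (b-a)/4 → |(P - Q).eval y| ≤ 2 * (C1 * W) := by
    intro y h1 h2
    rw [Polynomial.eval_sub]
    have hp := hP y (by linarith) h2
    rw [← hC1] at hp
    have hq := hQbound y h1 (by linarith)
    calc |P.eval y - Q.eval y| ≤ |P.eval y - f y| + |f y - Q.eval y| := abs_sub_le _ _ _
      _ ≤ C1*W + C1*W := add_le_add (by rwa [abs_sub_comm]) hq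
      _ = 2 * (C1*W) := by ring
  have hc0d0 : a + (b-a)/4 < b - (b-a)/4 := by linarith
  have hPQg : ∀ x, a ≤ x → x ≤ b → |(P-Q).eval x| ≤ CL * (2 * (C1*W)) := by
    intro x h1 h2
    have hd := poly_bound k hk (P - Q)
      (le_trans (Polynomial.natDegree_sub_le P Q) (Nat.max_le.mpr ⟨hPdeg, hQdeg⟩))
      (a + (b-a)/4) (b - (b-a)/4) hc0d0 (2*(C1*W))
      (fun y hy => hover y hy.1 hy.2) x (by linarith) (by linarith)
    rw [← hCL] at hd
    exact hd
  have hfinal : ∀ x ∈ Set.Icc a b, |F x - P.eval x| ≤ C1*(1+2*CL)*W := by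
    intro x hx
    rw [← hfeq x hx]
    by_cases hcase : x ≤ b - (b-a)/4
    · have h7 := hP x hx.1 hcase
      rw [← hC1] at h7
      calc |f x - P.eval x| ≤ C1 * W := h7
        _ ≤ C1*(1+2*CL)*W := by nlinarith [mul_nonneg (mul_nonneg hC1pos.le hCLpos.le) hW0]
    · push_neg at hcase
      have hx1 : a + (b-a)/4 ≤ x := by linarith
      have h5 := hQbound x hx1 hx.2
      have h6 := hPQg x hx.1 hx.2
      rw [Polynomial.eval_sub] at h6
      calc |f x - P.eval x| ≤ |f x - Q.eval x| + |Q.eval x - P.eval x| := abs_sub_le _ _ _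
        _ ≤ C1*W + CL*(2*(C1*W)) := add_le_add h5 (by rwa [abs_sub_comm])
        _ = C1*(1+2*CL)*W := by ring
  have hsup : supNorm (fun y => F y - P.eval y) a b
      ≤ C1*(1+2*CL) * smoothOmega k F (b-a) a b := by
    rw [hWeq]
    unfold _root_.supNorm
    apply Real.sSup_le
    · rintro w ⟨x, hx, rfl⟩
      calc |F x - P.eval x| ≤ C1*(1+2*CL)*W := hfinal x hx
        _ = C1*(1+2*CL)*W := rfl
    · have h8 : 0 ≤ C1 * (1 + 2*CL) := le_of_lt (mul_pos hC1pos (by linarith))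
      exact mul_nonneg h8 hW0
  have hbdd : BddBelow {v : ℝ | ∃ P : Polynomial ℝ, P.natDegree ≤ k - 1 ∧
      v = supNorm (fun y => F y - P.eval y) a b} := by
    refine ⟨0, ?_⟩
    rintro v ⟨P', _, rfl⟩
    unfold _root_.supNorm
    exact Real.sSup_nonneg (by rintro w ⟨x, hx, rfl⟩; positivity)
  exact le_trans (csInf_le hbdd ⟨P, hPdeg, rfl⟩) hsup

end WhitneyProof
end

section
/- Let x_0 ≤ x_1 ≤ ... ≤ x_{m-1}, x ∈ [x_0, x_{m-1}], and σ a permutation of {0,...,m-1} ordering the knots by increasing distance from x. Suppose p and r are indices with 0 ≤ p ≤ m-r-2 and x ∈ (x_p, x_{p+r}). Then |x - x_{σ_r}| ≤ max{x - x_p, x_{p+r} - x} ≤ x_{p+r} - x_p. -/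
open scoped BigOperators

/-- the combinatorial distance estimate for the ordering permutation. -/
theorem stmt17 (m r : ℕ) (x : ℕ → ℝ)
    (hmono : ∀ i j : ℕ, i ≤ j → j ≤ m - 1 → x i ≤ x j)
    (t : ℝ) (ht : t ∈ Set.Icc (x 0) (x (m - 1)))
    (σ : Fin m → Fin m) (hσ : Function.Bijective σ)
    (hord : ∀ i j : Fin m, i ≤ j → |t - x (σ i)| ≤ |t - x (σ j)|)
    (p : ℕ) (hp : p + r + 2 ≤ m)
    (htp : x p < t) (htq : t < x (p + r)) :
    |t - x (σ ⟨r, by omega⟩)| ≤ max (t - x p) (x (p + r) - t) ∧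
      max (t - x p) (x (p + r) - t) ≤ x (p + r) - x p := by
  have hm : 0 < m := by omega
  set e := Equiv.ofBijective σ hσ with he
  -- Pigeonhole: some j in [p, p+r] has e.symm index ≥ r
  have key : ∃ j : ℕ, p ≤ j ∧ j ≤ p + r ∧
      r ≤ ((e.symm ⟨j % m, Nat.mod_lt _ hm⟩ : Fin m) : ℕ) := by
    by_contra hcon
    push_neg at hcon
    set T : Finset (Fin m) :=
      (Finset.Icc p (p + r)).image (fun j => (⟨j % m, Nat.mod_lt _ hm⟩ : Fin m)) with hT
    have hmod : ∀ j ∈ Finset.Icc p (p + r), j % m = j := by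
      intro j hj
      simp only [Finset.mem_Icc] at hj
      exact Nat.mod_eq_of_lt (by omega)
    have hTcard : T.card = r + 1 := by
      rw [hT, Finset.card_image_of_injOn, Nat.card_Icc]
      · omega
      · intro a ha b hb hab
        have : a % m = b % m := congrArg Fin.val hab
        rwa [hmod a ha, hmod b hb] at this
    have hsub : T.image (fun i => e.symm i) ⊆
        (Finset.range r).image (fun j => (⟨j % m, Nat.mod_lt _ hm⟩ : Fin m)) := by
      intro i hi
      simp only [Finset.mem_image, hT] at hi
      obtain ⟨i', ⟨j, hj, rfl⟩, rfl⟩ := hi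
      have := hcon j (Finset.mem_Icc.mp hj).1 (Finset.mem_Icc.mp hj).2
      refine Finset.mem_image.mpr ⟨(e.symm ⟨j % m, Nat.mod_lt _ hm⟩ : Fin m), Finset.mem_range.mpr this, ?_⟩
      ext
      simp [Nat.mod_eq_of_lt (Fin.is_lt _)]
    have h1 : (T.image (fun i => e.symm i)).card = r + 1 := by
      rw [Finset.card_image_of_injective _ e.symm.injective, hTcard]
    have h2 := Finset.card_le_card hsub
    have h3 := Finset.card_image_le (s := Finset.range r)
      (f := fun j => (⟨j % m, Nat.mod_lt _ hm⟩ : Fin m))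
    simp [h1, Finset.card_range] at h2 h3
    omega
  obtain ⟨j, hj1, hj2, hj3⟩ := key
  have hjm : j % m = j := Nat.mod_eq_of_lt (by omega)
  set jF : Fin m := ⟨j % m, Nat.mod_lt _ hm⟩ with hjF
  have hordr : |t - x (σ ⟨r, by omega⟩)| ≤ |t - x (σ (e.symm jF))| :=
    hord _ _ (by simpa [Fin.le_def] using hj3)
  have hσe : σ (e.symm jF) = jF := e.apply_symm_apply jF
  rw [hσe] at hordr
  have hxj : (jF : ℕ) = j := hjm
  have hxp : x p ≤ x j := hmono p j hj1 (by omega)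
  have hxq : x j ≤ x (p + r) := hmono j (p + r) hj2 (by omega)
  constructor
  · refine hordr.trans ?_
    have : x jF = x j := by rw [hxj]
    rw [this]
    rcases le_total (x j) t with h | h
    · rw [abs_of_nonneg (by linarith)]
      exact le_max_of_le_left (by linarith)
    · rw [abs_of_nonpos (by linarith)]
      exact le_max_of_le_right (by linarith)
  · exact max_le (by linarith) (by linarith)
end
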